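/- arXiv:1103.3871 — 7 statements merged into one kernel-verified Lean document; each statement's English description precedes it below -/
import Mathlib

section
/- Let n ≥ 1 and let C ⊆ ℝ^n be a compact convex set with nonempty interior, and let d be a natural number. Then for every ε > 0 there exist δ ∈ (0,1) and a map f : ℝ^n → ℝ^n with f(ℝ^n) ⊆ C, f(x) = x for x ∈ C, f Lipschitz with constant 1 on ℝ^n, such that for every set E ⊆ ℝ^n with E ∩ B(C,ε) = ∅ one has H^d(f(E)) ≤ (1 − δ)^d · H^d(E). (Paper's Corollary 4.42: the retraction of Lemma 4.31 strictly decreases d-dimensional Hausdorff measure of sets lying outside the ε-neighborhood of C.) -/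
open MeasureTheory
open scoped RealInnerProductSpace ENNReal NNReal

set_option maxHeartbeats 1000000


/-- Auxiliary scalar inequality for the 1-Lipschitz estimate. -/
lemma stmt0_aux (R ε δ σ τ mx my a b qn ip : ℝ)
    (hR1 : 1 ≤ R) (hε : 0 < ε) (hδpos : 0 < δ) (hδhalf : δ ≤ 1/2)
    (hδR : δ * (8*R^2) ≤ ε^2)
    (ha0 : 0 ≤ a) (hb0 : 0 ≤ b)
    (hσ0 : 0 ≤ σ) (hσ1 : σ ≤ 1)
    (hσeq : σ * ε^2 = δ * mx^2) (hτeq : τ * ε^2 = δ * my^2)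
    (hmy0 : 0 ≤ my) (hmyx : my ≤ mx) (hmxε : mx ≤ ε) (hmb : mx - my ≤ b)
    (hq0 : 0 ≤ qn) (hqR : qn ≤ R) (hip : |ip| ≤ a * qn) :
    (1-σ)^2*a^2 - 2*(1-σ)*(σ-τ)*ip + (σ-τ)^2*qn^2 ≤ a^2 + b^2 := by
  have hR0 : (0:ℝ) < R := lt_of_lt_of_le one_pos hR1
  have hε2 : (0:ℝ) < ε^2 := by positivity
  have hmx0 : 0 ≤ mx := le_trans hmy0 hmyx
  have hmsq : my^2 ≤ mx^2 := by nlinarith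
  have hγ0 : 0 ≤ σ - τ := by
    nlinarith [mul_le_mul_of_nonneg_left hmsq hδpos.le]
  have hγle : (σ - τ) * ε^2 ≤ 2*δ*mx*b := by
    have t1 : (mx + my) * (mx - my) ≤ (2*mx) * b :=
      mul_le_mul (by linarith) hmb (by linarith) (by linarith)
    nlinarith [mul_le_mul_of_nonneg_left t1 hδpos.le]
  -- step 1
  have step1 : 2*(σ-τ)*a*R ≤ σ*a^2 + b^2/2 := by
    have amgm : 4*mx*a*R*b ≤ mx^2*a^2 + 4*R^2*b^2 := by
      nlinarith [sq_nonneg (mx*a - 2*R*b)]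
    have h2 : 2*(σ-τ)*a*R*ε^2 ≤ δ*(4*mx*a*R*b) := by
      have haR : (0:ℝ) ≤ 2*a*R := by positivity
      calc 2*(σ-τ)*a*R*ε^2 = ((σ-τ)*ε^2)*(2*a*R) := by ring
        _ ≤ (2*δ*mx*b)*(2*a*R) := mul_le_mul_of_nonneg_right hγle haR
        _ = δ*(4*mx*a*R*b) := by ring
    have h4 : δ*(4*mx*a*R*b) ≤ δ*(mx^2*a^2 + 4*R^2*b^2) :=
      mul_le_mul_of_nonneg_left amgm hδpos.le
    have h5 : δ*(mx^2*a^2) = σ*ε^2*a^2 := by linear_combination (-a^2) * hσeq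
    have h6 : δ*(4*R^2*b^2) ≤ (ε^2/2)*b^2 := by
      nlinarith [mul_le_mul_of_nonneg_right hδR (sq_nonneg b)]
    have h8 : (2*(σ-τ)*a*R)*ε^2 ≤ (σ*a^2 + b^2/2)*ε^2 := by
      nlinarith [h2, h4, h5, h6]
    exact le_of_mul_le_mul_right h8 hε2
  -- step 2
  have step2 : (σ-τ)^2*R^2 ≤ b^2/4 := by
    have hγε : (σ-τ)*ε ≤ 2*δ*b := by
      have h1 : ((σ-τ)*ε)*ε ≤ (2*δ*b)*ε := by
        have h2 : 2*δ*mx*b ≤ 2*δ*ε*b := by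
          nlinarith [mul_le_mul_of_nonneg_left hmxε (by positivity : (0:ℝ) ≤ 2*δ*b)]
        nlinarith [hγle]
      exact le_of_mul_le_mul_right h1 hε
    have hsq : (σ-τ)^2*ε^2 ≤ 4*δ^2*b^2 := by
      nlinarith [mul_self_le_mul_self (mul_nonneg hγ0 hε.le) hγε]
    have q1 : (((σ-τ)^2*ε^2))*R^2 ≤ (4*δ^2*b^2)*R^2 :=
      mul_le_mul_of_nonneg_right hsq (sq_nonneg R)
    have p1 : (δ*(8*R^2))*(δ*b^2) ≤ ε^2*(δ*b^2) :=
      mul_le_mul_of_nonneg_right hδR (mul_nonneg hδpos.le (sq_nonneg b))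
    have p2 : ε^2*(δ*b^2) ≤ ε^2*((1/2)*b^2) := by
      nlinarith [mul_le_mul_of_nonneg_right hδhalf (mul_nonneg (sq_nonneg ε) (sq_nonneg b))]
    have key : ((σ-τ)^2*R^2)*ε^2 ≤ (b^2/4)*ε^2 := by nlinarith [q1, p1, p2]
    exact le_of_mul_le_mul_right key hε2
  -- combine
  have hipR : |ip| ≤ a*R := hip.trans (mul_le_mul_of_nonneg_left hqR ha0)
  have c1 : -ip ≤ a*R := by have := abs_le.1 hipR; linarith [this.1]
  have c2 : 0 ≤ (1-σ)*(σ-τ) := mul_nonneg (by linarith) hγ0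
  have c3 : -(2*(1-σ)*(σ-τ)*ip) ≤ 2*(1-σ)*(σ-τ)*(a*R) := by
    nlinarith [mul_le_mul_of_nonneg_left c1 c2]
  have c4 : 2*(1-σ)*(σ-τ)*(a*R) ≤ 2*(σ-τ)*a*R := by
    nlinarith [mul_nonneg (mul_nonneg (mul_nonneg hσ0 hγ0) ha0) hR0.le]
  have c5 : (σ-τ)^2*qn^2 ≤ (σ-τ)^2*R^2 := by
    have hq2 : qn^2 ≤ R^2 := by nlinarith
    exact mul_le_mul_of_nonneg_left hq2 (sq_nonneg _)
  have c6 : (1-σ)^2*a^2 + σ*a^2 ≤ a^2 := by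
    nlinarith [mul_nonneg (mul_nonneg hσ0 (by linarith : (0:ℝ) ≤ 1-σ)) (sq_nonneg a)]
  linarith [step1, step2, c3, c4, c5, c6, sq_nonneg b]

/-- Paper's Corollary 4.42.  Let `C ⊆ ℝⁿ` be a compact convex set with
nonempty interior, `d` a natural number.  For every `ε > 0` there exist `δ ∈ (0,1)` and a
map `f : ℝⁿ → ℝⁿ` with range contained in `C`, fixing `C` pointwise, `1`-Lipschitz, such
that for every set `E` disjoint from the open `ε`-neighborhood of `C`,
`H^d(f(E)) ≤ (1 − δ)^d · H^d(E)`. -/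
theorem stmt0 (n : ℕ) (hn : 1 ≤ n) (C : Set (EuclideanSpace ℝ (Fin n)))
    (hCcomp : IsCompact C) (hCconv : Convex ℝ C) (hCint : (interior C).Nonempty)
    (d : ℕ) (ε : ℝ) (hε : 0 < ε) :
    ∃ δ ∈ Set.Ioo (0 : ℝ) 1,
      ∃ f : EuclideanSpace ℝ (Fin n) → EuclideanSpace ℝ (Fin n),
        Set.range f ⊆ C ∧ (∀ x ∈ C, f x = x) ∧ LipschitzWith 1 f ∧
        ∀ E : Set (EuclideanSpace ℝ (Fin n)), E ∩ Metric.thickening ε C = ∅ →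
          μH[(d : ℝ)] (f '' E) ≤ ENNReal.ofReal ((1 - δ) ^ d) * μH[(d : ℝ)] E := by
  classical
  obtain ⟨x₀, hx₀i⟩ := hCint
  have hx₀ : x₀ ∈ C := interior_subset hx₀i
  have hCne : C.Nonempty := ⟨x₀, hx₀⟩
  obtain ⟨R₀, hR₀⟩ := hCcomp.isBounded.subset_closedBall x₀
  set R : ℝ := max R₀ 1 with hRdef
  have hR1 : (1:ℝ) ≤ R := le_max_right _ _
  have hR0 : (0:ℝ) < R := lt_of_lt_of_le one_pos hR1
  have hRC : C ⊆ Metric.closedBall x₀ R :=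
    hR₀.trans (Metric.closedBall_subset_closedBall (le_max_left _ _))
  set δ : ℝ := min (1/2) (ε^2/(8*R^2)) with hδdef
  have hδpos : 0 < δ := lt_min (by norm_num) (by positivity)
  have hδhalf : δ ≤ 1/2 := min_le_left _ _
  have hδR : δ * (8*R^2) ≤ ε^2 := by
    have h := min_le_right (1/2 : ℝ) (ε^2/(8*R^2))
    have h8 : (0:ℝ) < 8*R^2 := by positivity
    calc δ * (8*R^2) ≤ ε^2/(8*R^2) * (8*R^2) := by
          exact mul_le_mul_of_nonneg_right h h8.le
      _ = ε^2 := by field_simp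
  -- the metric projection onto C
  have hcomplete : IsComplete C := hCcomp.isClosed.isComplete
  have hex : ∀ x : EuclideanSpace ℝ (Fin n),
      ∃ p, p ∈ C ∧ ∀ z ∈ C, ⟪x - p, z - p⟫ ≤ 0 := by
    intro x
    obtain ⟨v, hv, hvn⟩ := exists_norm_eq_iInf_of_complete_convex hCne hcomplete hCconv x
    exact ⟨v, hv, (norm_eq_iInf_iff_real_inner_le_zero hCconv hv).1 hvn⟩
  choose p hpC hpI using hex
  set D : EuclideanSpace ℝ (Fin n) → ℝ := fun x => ‖x - p x‖ with hDdef
  set m : EuclideanSpace ℝ (Fin n) → ℝ := fun x => min (D x) ε with hmdef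
  set s : EuclideanSpace ℝ (Fin n) → ℝ := fun x => δ * (m x)^2 / ε^2 with hsdef
  set f : EuclideanSpace ℝ (Fin n) → EuclideanSpace ℝ (Fin n) :=
    fun x => x₀ + (1 - s x) • (p x - x₀) with hfdef
  have hD0 : ∀ x, 0 ≤ D x := fun x => norm_nonneg _
  have hm0 : ∀ x, 0 ≤ m x := fun x => le_min (hD0 x) hε.le
  have hmε : ∀ x, m x ≤ ε := fun x => min_le_right _ _
  have hs0 : ∀ x, 0 ≤ s x := fun x => by
    have := hm0 x; positivity
  have hsδ : ∀ x, s x ≤ δ := by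
    intro x
    have h1 : (m x)^2 ≤ ε^2 := by
      have := hm0 x; have := hmε x; nlinarith
    have h2 : δ * (m x)^2 ≤ δ * ε^2 := by nlinarith
    have hε2 : (0:ℝ) < ε^2 := by positivity
    calc s x = δ * (m x)^2 / ε^2 := rfl
      _ ≤ δ * ε^2 / ε^2 := (div_le_div_iff_of_pos_right hε2).mpr h2
      _ = δ := by field_simp
  have hs1 : ∀ x, s x ≤ 1 := fun x => (hsδ x).trans (by linarith)
  have hseq : ∀ x, s x * ε^2 = δ * (m x)^2 := by
    intro x; show δ * (m x)^2 / ε^2 * ε^2 = δ * (m x)^2; exact div_mul_cancel₀ _ (by positivity)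
  -- p fixes C
  have hpid : ∀ x ∈ C, p x = x := by
    intro x hx
    have h := hpI x x hx
    have : ⟪x - p x, x - p x⟫ ≤ 0 := h
    have := real_inner_self_nonpos.1 this
    have := sub_eq_zero.1 this
    exact this.symm
  -- range of f ⊆ C
  have hrange : Set.range f ⊆ C := by
    rintro _ ⟨x, rfl⟩
    have hmem : s x • x₀ + (1 - s x) • p x ∈ C :=
      hCconv hx₀ (hpC x) (hs0 x) (by linarith [hs1 x]) (by ring)
    have : f x = s x • x₀ + (1 - s x) • p x := by
      simp only [hfdef]
      module
    rwa [this]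
  -- f fixes C
  have hfix : ∀ x ∈ C, f x = x := by
    intro x hx
    have hp : p x = x := hpid x hx
    have hDx : D x = 0 := by simp [hDdef, hp]
    have hmx : m x = 0 := by simp [hmdef, hDx, hε.le]
    have hsx : s x = 0 := by simp [hsdef, hmx]
    simp [hfdef, hsx, hp]
  -- basic projection geometry
  have hmono : ∀ x y, 0 ≤ ⟪p x - p y, (x - p x) - (y - p y)⟫ := by
    intro x y
    have h1 := hpI x (p y) (hpC y)
    have h2 := hpI y (p x) (hpC x)
    have e1 : ⟪x - p x, p y - p x⟫ = -⟪p x - p y, x - p x⟫ := by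
      rw [show p y - p x = -(p x - p y) by abel, inner_neg_right, real_inner_comm]
    have e2 : ⟪y - p y, p x - p y⟫ = ⟪p x - p y, y - p y⟫ := real_inner_comm _ _
    rw [inner_sub_right]
    rw [e1] at h1; rw [e2] at h2
    linarith
  have hdecomp : ∀ x y, ‖x - y‖^2 = ‖p x - p y‖^2
      + 2 * ⟪p x - p y, (x - p x) - (y - p y)⟫ + ‖(x - p x) - (y - p y)‖^2 := by
    intro x y
    have : x - y = (p x - p y) + ((x - p x) - (y - p y)) := by abel
    rw [this, norm_add_sq_real]
  have hlow : ∀ x y, ‖p x - p y‖^2 + (D x - D y)^2 ≤ ‖x - y‖^2 := by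
    intro x y
    have h1 := hmono x y
    have h2 : |D x - D y| ≤ ‖(x - p x) - (y - p y)‖ := abs_norm_sub_norm_le _ _
    have h3 : (D x - D y)^2 ≤ ‖(x - p x) - (y - p y)‖^2 := by
      have := abs_nonneg (D x - D y)
      calc (D x - D y)^2 = |D x - D y|^2 := (sq_abs _).symm
        _ ≤ ‖(x - p x) - (y - p y)‖^2 := by nlinarith [norm_nonneg ((x - p x) - (y - p y))]
    rw [hdecomp x y]
    linarith
  -- the core quadratic estimate, assuming D y ≤ D x
  have hcore : ∀ x y, D y ≤ D x → ‖f x - f y‖^2 ≤ ‖x - y‖^2 := by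
    intro x y hDxy
    set a : ℝ := ‖p x - p y‖ with hadef
    set b : ℝ := D x - D y with hbdef
    have hb0 : 0 ≤ b := by simp [hbdef]; linarith
    have ha0 : 0 ≤ a := norm_nonneg _
    set σ : ℝ := s x with hσdef
    set τ : ℝ := s y with hτdef
    set γ : ℝ := σ - τ with hγdef
    -- m y ≤ m x and m x - m y ≤ b
    have hmyx : m y ≤ m x := min_le_min hDxy le_rfl
    have hmb : m x - m y ≤ b := by
      have hDb : D x ≤ D y + b := by simp [hbdef]
      have h2 : min (D x) ε ≤ min (D y + b) (ε + b) :=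
        min_le_min hDb (by linarith)
      have h3 : min (D y + b) (ε + b) = min (D y) ε + b := min_add_add_right _ _ _
      have h4 := h2.trans_eq h3
      simp only [hmdef]
      linarith
    have hσeq2 : σ * ε^2 = δ * (m x)^2 := by rw [hσdef]; exact hseq x
    have hτeq2 : τ * ε^2 = δ * (m y)^2 := by rw [hτdef]; exact hseq y
    have hmsq : (m y)^2 ≤ (m x)^2 := by
      nlinarith [mul_nonneg (by linarith [hm0 y, hmyx] : (0:ℝ) ≤ m x + m y)
        (by linarith : (0:ℝ) ≤ m x - m y)]
    have hε2 : (0:ℝ) < ε^2 := by positivity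
    have hγ0 : 0 ≤ γ := by
      have h : 0 ≤ γ * ε^2 := by
        rw [hγdef, sub_mul, hσeq2, hτeq2]
        nlinarith [hδpos.le, hmsq]
      nlinarith [h, hε2]
    have hγle : γ * ε^2 ≤ 2*δ*(m x)*b := by
      have h : γ * ε^2 = δ * ((m x)^2 - (m y)^2) := by
        rw [hγdef, sub_mul, hσeq2, hτeq2]; ring
      rw [h]
      have t1 : (m x + m y) * (m x - m y) ≤ (2*(m x)) * b := by
        apply mul_le_mul (by linarith) hmb (by linarith) (by linarith [hm0 x, hm0 y])
      calc δ * ((m x)^2 - (m y)^2) = δ * ((m x + m y) * (m x - m y)) := by ring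
        _ ≤ δ * ((2*(m x)) * b) := mul_le_mul_of_nonneg_left t1 hδpos.le
        _ = 2*δ*(m x)*b := by ring
    -- the vector identity for f x - f y
    have hveq : f x - f y = (1 - σ) • (p x - p y) - γ • (p y - x₀) := by
      simp only [hfdef, hσdef, hτdef, hγdef]
      module
    have hq'R : ‖p y - x₀‖ ≤ R := by
      have := hRC (hpC y)
      rw [Metric.mem_closedBall, dist_eq_norm] at this
      exact this
    have hip : |⟪p x - p y, p y - x₀⟫| ≤ a * ‖p y - x₀‖ := by
      calc |⟪p x - p y, p y - x₀⟫| ≤ ‖p x - p y‖ * ‖p y - x₀‖ := abs_real_inner_le_norm _ _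
        _ = a * ‖p y - x₀‖ := by rw [hadef]
    have hγ0 : 0 ≤ γ := by
      have hmsq : (m y)^2 ≤ (m x)^2 := by
        nlinarith [mul_nonneg (by linarith [hm0 y, hmyx] : (0:ℝ) ≤ m x + m y)
          (by linarith : (0:ℝ) ≤ m x - m y)]
      have hε2 : (0:ℝ) < ε^2 := by positivity
      have h : 0 ≤ γ * ε^2 := by
        rw [hγdef, sub_mul, hσeq2, hτeq2]
        nlinarith [hδpos.le, hmsq]
      nlinarith [h, hε2]
    have hexp : ‖f x - f y‖^2 = (1-σ)^2 * a^2
        - 2*(1-σ)*γ*⟪p x - p y, p y - x₀⟫ + γ^2 * ‖p y - x₀‖^2 := by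
      rw [hveq, norm_sub_sq_real, norm_smul, norm_smul, real_inner_smul_left,
        real_inner_smul_right]
      have h1σ : |1 - σ| = 1 - σ := abs_of_nonneg (by linarith [hs1 x])
      have hγa : |γ| = γ := abs_of_nonneg hγ0
      rw [Real.norm_eq_abs, Real.norm_eq_abs, h1σ, hγa]
      ring
    have hfin : ‖f x - f y‖^2 ≤ a^2 + b^2 := by
      rw [hexp, hγdef]
      have := stmt0_aux R ε δ σ τ (m x) (m y) a b (‖p y - x₀‖) (⟪p x - p y, p y - x₀⟫)
        hR1 hε hδpos hδhalf hδR ha0 hb0 (hs0 x) (hs1 x) hσeq2 hτeq2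
        (hm0 y) hmyx (hmε x) hmb (norm_nonneg _) hq'R hip
      linarith [this]
    calc ‖f x - f y‖^2 ≤ a^2 + b^2 := hfin
      _ ≤ ‖x - y‖^2 := by
          have := hlow x y
          simp only [hadef, hbdef] at *
          linarith
  -- global 1-Lipschitz
  have hlipnorm : ∀ x y, ‖f x - f y‖ ≤ ‖x - y‖ := by
    intro x y
    rcases le_total (D y) (D x) with h | h
    · have := hcore x y h
      calc ‖f x - f y‖ = Real.sqrt (‖f x - f y‖^2) := by
            rw [Real.sqrt_sq (norm_nonneg _)]
        _ ≤ Real.sqrt (‖x - y‖^2) := Real.sqrt_le_sqrt this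
        _ = ‖x - y‖ := Real.sqrt_sq (norm_nonneg _)
    · have := hcore y x h
      rw [norm_sub_rev, show x - y = -(y - x) by abel, norm_neg]
      calc ‖f y - f x‖ = Real.sqrt (‖f y - f x‖^2) := by
            rw [Real.sqrt_sq (norm_nonneg _)]
        _ ≤ Real.sqrt (‖y - x‖^2) := Real.sqrt_le_sqrt this
        _ = ‖y - x‖ := Real.sqrt_sq (norm_nonneg _)
  have hlip : LipschitzWith 1 f := by
    apply LipschitzWith.of_dist_le_mul
    intro x y
    rw [NNReal.coe_one, one_mul, dist_eq_norm, dist_eq_norm]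
    exact hlipnorm x y
  -- contraction far away
  have hfar : ∀ x y, ε ≤ D x → ε ≤ D y → ‖f x - f y‖ ≤ (1-δ) * ‖x - y‖ := by
    intro x y hx hy
    have hmx : m x = ε := min_eq_right hx
    have hmy : m y = ε := min_eq_right hy
    have hsx : s x = δ := by
      simp only [hsdef, hmx]; field_simp
    have hsy : s y = δ := by
      simp only [hsdef, hmy]; field_simp
    have hveq : f x - f y = (1 - δ) • (p x - p y) := by
      simp only [hfdef, hsx, hsy]
      module
    have hproj : ‖p x - p y‖ ≤ ‖x - y‖ := by
      have h := hlow x y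
      have h2 : ‖p x - p y‖^2 ≤ ‖x - y‖^2 := by nlinarith [sq_nonneg (D x - D y)]
      calc ‖p x - p y‖ = Real.sqrt (‖p x - p y‖^2) := by rw [Real.sqrt_sq (norm_nonneg _)]
        _ ≤ Real.sqrt (‖x - y‖^2) := Real.sqrt_le_sqrt h2
        _ = ‖x - y‖ := Real.sqrt_sq (norm_nonneg _)
    rw [hveq, norm_smul, Real.norm_eq_abs, abs_of_nonneg (by linarith : (0:ℝ) ≤ 1 - δ)]
    exact mul_le_mul_of_nonneg_left hproj (by linarith)
  refine ⟨δ, ⟨hδpos, by linarith⟩, f, hrange, hfix, hlip, ?_⟩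
  intro E hE
  have hEd : ∀ x ∈ E, ε ≤ D x := by
    intro x hx
    by_contra h
    push_neg at h
    have hxthick : x ∈ Metric.thickening ε C := by
      rw [Metric.mem_thickening_iff]
      exact ⟨p x, hpC x, by rwa [dist_eq_norm]⟩
    have : x ∈ E ∩ Metric.thickening ε C := ⟨hx, hxthick⟩
    rw [hE] at this
    exact this
  have h1δ : (0:ℝ) ≤ 1 - δ := by linarith
  have hlipE : LipschitzOnWith ((1-δ).toNNReal) f E := by
    apply LipschitzOnWith.of_dist_le_mul
    intro x hx y hy
    rw [Real.coe_toNNReal _ h1δ, dist_eq_norm, dist_eq_norm]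
    exact hfar x y (hEd x hx) (hEd y hy)
  have hmeas := hlipE.hausdorffMeasure_image_le (d := (d:ℝ)) (Nat.cast_nonneg d)
  have hcoe : ((((1-δ).toNNReal) : ℝ≥0∞)) ^ ((d:ℕ):ℝ) = ENNReal.ofReal ((1 - δ) ^ d) := by
    rw [ENNReal.rpow_natCast, ENNReal.ofReal_pow h1δ]
    rfl
  rwa [hcoe] at hmeas
end

section
/- Let n ≥ 1 and let C ⊆ ℝ^n be a compact convex set with 0 in its interior. Then for every ε > 0 there exist real numbers a > 0 and b > 0 such that C ⊆ {x ∈ ℝ^n : gauge C x + a·‖x‖ ≤ b} ⊆ B(C,ε). (Claim (4.41) in the proof of Lemma 4.31: the sublevel sets of the perturbed gauge squeeze between C and its ε-neighborhood.) -/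
/-- claim (4.41) in the proof of Lemma 4.31.  Let `C ⊆ ℝⁿ` be a compact
convex set with `0` in its interior.  For every `ε > 0` there exist `a, b > 0` such that
`C ⊆ {x : gauge C x + a‖x‖ ≤ b} ⊆ B(C, ε)`. -/
theorem stmt1 (n : ℕ) (hn : 1 ≤ n) (C : Set (EuclideanSpace ℝ (Fin n)))
    (hCcomp : IsCompact C) (hCconv : Convex ℝ C)
    (h0 : (0 : EuclideanSpace ℝ (Fin n)) ∈ interior C)
    (ε : ℝ) (hε : 0 < ε) :
    ∃ a > (0 : ℝ), ∃ b > (0 : ℝ),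
      C ⊆ {x : EuclideanSpace ℝ (Fin n) | gauge C x + a * ‖x‖ ≤ b} ∧
      {x : EuclideanSpace ℝ (Fin n) | gauge C x + a * ‖x‖ ≤ b} ⊆ Metric.thickening ε C := by
  have hC0 : C ∈ nhds (0 : EuclideanSpace ℝ (Fin n)) :=
    mem_interior_iff_mem_nhds.mp h0
  obtain ⟨R₀, hR₀⟩ := hCcomp.isBounded.subset_closedBall 0
  set R : ℝ := max R₀ 1 with hR
  have hR1 : (1 : ℝ) ≤ R := le_max_right _ _
  have hRpos : (0 : ℝ) < R := lt_of_lt_of_le one_pos hR1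
  have hCR : ∀ x ∈ C, ‖x‖ ≤ R := by
    intro x hx
    have := hR₀ hx
    simp only [Metric.mem_closedBall, dist_zero_right] at this
    exact this.trans (le_max_left _ _)
  set a : ℝ := ε / (2 * R ^ 2) with ha
  have hapos : 0 < a := by positivity
  set b : ℝ := 1 + a * R with hb
  have hbpos : (0 : ℝ) < b := by positivity
  refine ⟨a, hapos, b, hbpos, ?_, ?_⟩
  · intro x hx
    have h1 : gauge C x ≤ 1 := gauge_le_one_of_mem hx
    have h2 : a * ‖x‖ ≤ a * R := by
      exact mul_le_mul_of_nonneg_left (hCR x hx) hapos.le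
    simp only [Set.mem_setOf_eq]
    linarith
  · intro x hx
    simp only [Set.mem_setOf_eq] at hx
    have hg : gauge C x ≤ b := by
      have : 0 ≤ a * ‖x‖ := by positivity
      linarith
    have hy : gauge C (b⁻¹ • x) ≤ 1 := by
      rw [gauge_smul_of_nonneg (inv_nonneg.mpr hbpos.le)]
      rw [smul_eq_mul]
      rw [inv_mul_le_iff₀ hbpos, mul_one]
      exact hg
    have hymem : b⁻¹ • x ∈ C := by
      have := (gauge_le_one_iff_mem_closure hCconv hC0).mp hy
      rwa [hCcomp.isClosed.closure_eq] at this
    rw [Metric.mem_thickening_iff]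
    refine ⟨b⁻¹ • x, hymem, ?_⟩
    have hxy : x - b⁻¹ • x = ((1 - b⁻¹) * b) • (b⁻¹ • x) := by
      rw [smul_smul, mul_assoc, mul_inv_cancel₀ hbpos.ne', mul_one, sub_smul, one_smul]
    have hynorm : ‖b⁻¹ • x‖ ≤ R := hCR _ hymem
    rw [dist_eq_norm, hxy, norm_smul]
    have h1b : (0 : ℝ) ≤ 1 - b⁻¹ := by
      have : b⁻¹ ≤ 1 := inv_le_one_of_one_le₀ (by simp [hb]; positivity)
      linarith
    have habs : ‖(1 - b⁻¹) * b‖ = (1 - b⁻¹) * b := by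
      rw [Real.norm_eq_abs, abs_of_nonneg (by positivity)]
    rw [habs]
    have hval : (1 - b⁻¹) * b = a * R := by
      field_simp [hb]
      linarith
    rw [hval]
    calc a * R * ‖b⁻¹ • x‖ ≤ a * R * R :=
          mul_le_mul_of_nonneg_left hynorm (by positivity)
      _ = ε / 2 := by rw [ha]; field_simp
      _ < ε := half_lt_self hε
end

section
/- Let n ≥ 1, let C ⊆ ℝ^n be a compact convex set with 0 in its interior, and let a, b > 0. Define C_{a,b} = {x ∈ ℝ^n : gauge C x + a·‖x‖ ≤ b}. Then C_{a,b} is a compact convex set, and there exists M > 0 such that for all x, y in the frontier of C_{a,b} with ⟨x,y⟩ > 0 (i.e. the angle between x and y is less than π/2), the closed ball of center (x+y)/2 and radius M·‖x−y‖² is contained in C_{a,b}. (Claim (4.36) in the proof of Lemma 4.31: quantitative uniform convexity of the sets C_{a,b}.) -/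
open scoped RealInnerProductSpace

set_option maxHeartbeats 2000000 in
/-- claim (4.36) in the proof of Lemma 4.31.  Let `C ⊆ ℝⁿ` be a compact
convex set with `0` in its interior and `a, b > 0`.  Then
`C_{a,b} = {x : gauge C x + a‖x‖ ≤ b}` is a compact convex set, and there is `M > 0` such
that for all `x, y` in the frontier of `C_{a,b}` with `⟪x, y⟫ > 0`, the closed ball of
center `(x+y)/2` and radius `M‖x−y‖²` is contained in `C_{a,b}`. -/
theorem stmt2 (n : ℕ) (hn : 1 ≤ n) (C : Set (EuclideanSpace ℝ (Fin n)))
    (hCcomp : IsCompact C) (hCconv : Convex ℝ C)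
    (h0 : (0 : EuclideanSpace ℝ (Fin n)) ∈ interior C)
    (a b : ℝ) (ha : 0 < a) (hb : 0 < b) :
    IsCompact {z : EuclideanSpace ℝ (Fin n) | gauge C z + a * ‖z‖ ≤ b} ∧
    Convex ℝ {z : EuclideanSpace ℝ (Fin n) | gauge C z + a * ‖z‖ ≤ b} ∧
    ∃ M > (0 : ℝ),
      ∀ x ∈ frontier {z : EuclideanSpace ℝ (Fin n) | gauge C z + a * ‖z‖ ≤ b},
      ∀ y ∈ frontier {z : EuclideanSpace ℝ (Fin n) | gauge C z + a * ‖z‖ ≤ b},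
        0 < ⟪x, y⟫ →
        Metric.closedBall (midpoint ℝ x y) (M * ‖x - y‖ ^ 2) ⊆
          {z : EuclideanSpace ℝ (Fin n) | gauge C z + a * ‖z‖ ≤ b} := by
  have h0' : C ∈ nhds (0 : EuclideanSpace ℝ (Fin n)) := mem_interior_iff_mem_nhds.mp h0
  have habs : Absorbent ℝ C := absorbent_nhds_zero h0'
  obtain ⟨s, hs0, hball⟩ := Metric.mem_nhds_iff.mp h0'
  set S := {z : EuclideanSpace ℝ (Fin n) | gauge C z + a * ‖z‖ ≤ b} with hSdef
  -- gauge upper bound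
  have hgle : ∀ z : EuclideanSpace ℝ (Fin n), gauge C z ≤ ‖z‖ / s := by
    intro z
    have h1 : gauge C z ≤ gauge (Metric.ball (0 : EuclideanSpace ℝ (Fin n)) s) z :=
      gauge_mono (absorbent_nhds_zero (Metric.ball_mem_nhds 0 hs0)) hball z
    rwa [gauge_ball hs0.le] at h1
  have hL : 0 < 1 / s + a := by positivity
  -- one-sided Lipschitz bound
  have key : ∀ z w : EuclideanSpace ℝ (Fin n),
      gauge C z + a * ‖z‖ ≤ (gauge C w + a * ‖w‖) + (1 / s + a) * ‖z - w‖ := by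
    intro z w
    have h1 : gauge C z ≤ gauge C w + gauge C (z - w) := by
      have := gauge_add_le hCconv habs w (z - w)
      simpa using this
    have h2 : gauge C (z - w) ≤ ‖z - w‖ / s := hgle _
    have h3 : ‖z‖ ≤ ‖w‖ + ‖z - w‖ := by
      have := norm_add_le w (z - w); simpa using this
    have h4 : gauge C (z - w) ≤ (1 / s) * ‖z - w‖ := by
      rw [div_eq_inv_mul, ← one_div] at h2; exact h2
    have h6 : a * ‖z‖ ≤ a * ‖w‖ + a * ‖z - w‖ := by nlinarith
    nlinarith [h1, h4, h6]
  have hcont : Continuous (fun z : EuclideanSpace ℝ (Fin n) => gauge C z + a * ‖z‖) := by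
    have hlip : LipschitzWith (Real.toNNReal (1 / s + a))
        (fun z : EuclideanSpace ℝ (Fin n) => gauge C z + a * ‖z‖) := by
      apply LipschitzWith.of_dist_le_mul
      intro z w
      rw [Real.coe_toNNReal _ hL.le, Real.dist_eq, dist_eq_norm, abs_sub_le_iff]
      constructor
      · have := key z w; linarith
      · have h1 := key w z
        rw [norm_sub_rev] at h1
        linarith
    exact hlip.continuous
  have hclosed : IsClosed S := by
    have : S = (fun z : EuclideanSpace ℝ (Fin n) => gauge C z + a * ‖z‖) ⁻¹' Set.Iic b := rfl
    rw [this]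
    exact isClosed_Iic.preimage hcont
  have hsub : S ⊆ Metric.closedBall 0 (b / a) := by
    intro z hz
    have hz' : gauge C z + a * ‖z‖ ≤ b := hz
    have hg := gauge_nonneg (s := C) z
    rw [Metric.mem_closedBall, dist_zero_right, le_div_iff₀ ha]
    nlinarith
  have hcompact : IsCompact S :=
    Metric.isCompact_of_isClosed_isBounded hclosed
      (Metric.isBounded_closedBall.subset hsub)
  have hconv : Convex ℝ S := by
    intro z hz w hw α β hα hβ hαβ
    have hz' : gauge C z + a * ‖z‖ ≤ b := hz
    have hw' : gauge C w + a * ‖w‖ ≤ b := hw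
    have h1 : gauge C (α • z + β • w) ≤ α * gauge C z + β * gauge C w := by
      calc gauge C (α • z + β • w) ≤ gauge C (α • z) + gauge C (β • w) :=
            gauge_add_le hCconv habs _ _
        _ = α * gauge C z + β * gauge C w := by
            rw [gauge_smul_of_nonneg hα, gauge_smul_of_nonneg hβ, smul_eq_mul, smul_eq_mul]
    have h2 : ‖α • z + β • w‖ ≤ α * ‖z‖ + β * ‖w‖ := by
      calc ‖α • z + β • w‖ ≤ ‖α • z‖ + ‖β • w‖ := norm_add_le _ _
        _ = α * ‖z‖ + β * ‖w‖ := by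
            rw [norm_smul, norm_smul, Real.norm_eq_abs, Real.norm_eq_abs,
              abs_of_nonneg hα, abs_of_nonneg hβ]
    show gauge C (α • z + β • w) + a * ‖α • z + β • w‖ ≤ b
    nlinarith [mul_le_mul_of_nonneg_left hz' hα, mul_le_mul_of_nonneg_left hw' hβ]
  refine ⟨hcompact, hconv, ?_⟩
  -- frontier lies on the level set
  have hfr : ∀ x ∈ frontier S, gauge C x + a * ‖x‖ = b := by
    intro x hx
    have hxS : x ∈ S := hclosed.frontier_subset hx
    have h1 : gauge C x + a * ‖x‖ ≤ b := hxS
    rcases h1.lt_or_eq with hlt | heq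
    · exfalso
      have hop : IsOpen {z : EuclideanSpace ℝ (Fin n) | gauge C z + a * ‖z‖ < b} :=
        isOpen_lt hcont continuous_const
      have hss : {z : EuclideanSpace ℝ (Fin n) | gauge C z + a * ‖z‖ < b} ⊆ S := by
        intro z hz
        have hz' : gauge C z + a * ‖z‖ < b := hz
        exact le_of_lt hz'
      have : x ∈ interior S := interior_maximal hss hop hlt
      rw [frontier, Set.mem_diff] at hx
      exact hx.2 this
    · exact heq
  -- names for the constants
  set L : ℝ := 1 / s + a with hLdef
  set R : ℝ := b / a with hRdef
  set rr : ℝ := b / L with hrrdef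
  set M : ℝ := a ^ 3 * rr ^ 2 / (8 * R ^ 3 * (a + L) ^ 2 * L) with hMdef
  have hR : 0 < R := div_pos hb ha
  have hrr : 0 < rr := div_pos hb hL
  have haL : 0 < a + L := by linarith
  have hM : 0 < M := by
    rw [hMdef]
    exact div_pos (mul_pos (pow_pos ha 3) (pow_pos hrr 2))
      (mul_pos (mul_pos (mul_pos (by norm_num) (pow_pos hR 3)) (pow_pos haL 2)) hL)
  clear_value L R rr M
  refine ⟨M, hM, ?_⟩
  intro x hx y hy _hip z hz
  -- basic facts about the frontier points
  have hfx : gauge C x + a * ‖x‖ = b := hfr x hx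
  have hfy : gauge C y + a * ‖y‖ = b := hfr y hy
  have hgnx := gauge_nonneg (s := C) x
  have hgny := gauge_nonneg (s := C) y
  have hxR : ‖x‖ ≤ R := by rw [hRdef, le_div_iff₀ ha]; linarith only [hfx, hgnx]
  have hyR : ‖y‖ ≤ R := by rw [hRdef, le_div_iff₀ ha]; linarith only [hfy, hgny]
  have hxr : rr ≤ ‖x‖ := by
    have h1 := key x 0
    simp only [gauge_zero, norm_zero, sub_zero, mul_zero, add_zero, zero_add] at h1
    rw [hrrdef, div_le_iff₀ hL]
    linarith only [h1, hfx, hgnx]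
  have hyr : rr ≤ ‖y‖ := by
    have h1 := key y 0
    simp only [gauge_zero, norm_zero, sub_zero, mul_zero, add_zero, zero_add] at h1
    rw [hrrdef, div_le_iff₀ hL]
    linarith only [h1, hfy, hgny]
  have hx0 : x ≠ 0 := by
    intro h
    rw [h, norm_zero] at hxr
    linarith
  have hy0 : y ≠ 0 := by
    intro h
    rw [h, norm_zero] at hyr
    linarith
  -- normalized vectors
  set u : EuclideanSpace ℝ (Fin n) := ‖x‖⁻¹ • x with hudef
  set v : EuclideanSpace ℝ (Fin n) := ‖y‖⁻¹ • y with hvdef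
  have hxu : ‖x‖ • u = x := smul_inv_smul₀ (norm_ne_zero_iff.mpr hx0) x
  have hyv : ‖y‖ • v = y := smul_inv_smul₀ (norm_ne_zero_iff.mpr hy0) y
  have hu1 : ‖u‖ = 1 := by
    rw [hudef, norm_smul, Real.norm_eq_abs, abs_of_nonneg (inv_nonneg.mpr (norm_nonneg x)),
      inv_mul_cancel₀ (norm_ne_zero_iff.mpr hx0)]
  have hv1 : ‖v‖ = 1 := by
    rw [hvdef, norm_smul, Real.norm_eq_abs, abs_of_nonneg (inv_nonneg.mpr (norm_nonneg y)),
      inv_mul_cancel₀ (norm_ne_zero_iff.mpr hy0)]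
  -- the function evaluated at the normalized vectors
  have hgxu : gauge C x = ‖x‖ * gauge C u := by
    conv_lhs => rw [← hxu]
    rw [gauge_smul_of_nonneg (norm_nonneg x), smul_eq_mul]
  have hgyv : gauge C y = ‖y‖ * gauge C v := by
    conv_lhs => rw [← hyv]
    rw [gauge_smul_of_nonneg (norm_nonneg y), smul_eq_mul]
  have hfu : ‖x‖ * (gauge C u + a * ‖u‖) = b := by
    rw [hu1]
    linear_combination -hgxu + hfx
  have hfv : ‖y‖ * (gauge C v + a * ‖v‖) = b := by
    rw [hv1]
    linear_combination -hgyv + hfy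
  have hgu0 := gauge_nonneg (s := C) u
  have hgv0 := gauge_nonneg (s := C) v
  -- Lipschitz bound between the values at u and v
  have huv1 : gauge C u + a * ‖u‖ ≤ (gauge C v + a * ‖v‖) + L * ‖u - v‖ := key u v
  have huv2 : gauge C v + a * ‖v‖ ≤ (gauge C u + a * ‖u‖) + L * ‖v - u‖ := key v u
  rw [norm_sub_rev] at huv2
  -- |‖x‖ - ‖y‖| is controlled by ‖u - v‖
  have hF1 : a * |‖x‖ - ‖y‖| ≤ R * (L * ‖u - v‖) := by
    have e1 : (gauge C u + a * ‖u‖) * (‖x‖ - ‖y‖) = ‖y‖ * ((gauge C v + a * ‖v‖) - (gauge C u + a * ‖u‖)) := by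
      linear_combination hfu - hfv
    have hfua : a ≤ gauge C u + a * ‖u‖ := by rw [hu1]; linarith
    have hfva : a ≤ gauge C v + a * ‖v‖ := by rw [hv1]; linarith
    have hnuv : (0:ℝ) ≤ ‖u - v‖ := norm_nonneg _
    rcases le_total ‖y‖ ‖x‖ with hc | hc
    · rw [abs_of_nonneg (by linarith)]
      have f1 := mul_le_mul_of_nonneg_left (show (gauge C v + a * ‖v‖) - (gauge C u + a * ‖u‖) ≤ L * ‖u - v‖ by linarith only [huv2]) (norm_nonneg y)
      have f2 := mul_le_mul_of_nonneg_right hfua (show (0:ℝ) ≤ ‖x‖ - ‖y‖ by linarith only [hc])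
      have f3 := mul_le_mul_of_nonneg_right hyR (mul_nonneg hL.le hnuv)
      linarith only [e1, f1, f2, f3]
    · rw [abs_of_nonpos (by linarith)]
      have e2 : (gauge C v + a * ‖v‖) * (‖y‖ - ‖x‖) = ‖x‖ * ((gauge C u + a * ‖u‖) - (gauge C v + a * ‖v‖)) := by
        linear_combination hfv - hfu
      have f1 := mul_le_mul_of_nonneg_left (show (gauge C u + a * ‖u‖) - (gauge C v + a * ‖v‖) ≤ L * ‖u - v‖ by linarith only [huv1]) (norm_nonneg x)
      have f2 := mul_le_mul_of_nonneg_right hfva (show (0:ℝ) ≤ ‖y‖ - ‖x‖ by linarith only [hc])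
      have f3 := mul_le_mul_of_nonneg_right hxR (mul_nonneg hL.le hnuv)
      linarith only [e2, f1, f2, f3]
  -- ‖x - y‖ is controlled by ‖u - v‖
  have hdec : x - y = ‖x‖ • (u - v) + (‖x‖ - ‖y‖) • v := by
    rw [smul_sub, sub_smul, hxu, hyv]
    abel
  have hF2 : ‖x - y‖ ≤ ‖x‖ * ‖u - v‖ + |‖x‖ - ‖y‖| := by
    calc ‖x - y‖ = ‖‖x‖ • (u - v) + (‖x‖ - ‖y‖) • v‖ := by rw [← hdec]
      _ ≤ ‖‖x‖ • (u - v)‖ + ‖(‖x‖ - ‖y‖) • v‖ := norm_add_le _ _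
      _ = ‖x‖ * ‖u - v‖ + |‖x‖ - ‖y‖| := by
          rw [norm_smul, norm_smul, hv1, Real.norm_eq_abs, Real.norm_eq_abs,
            abs_of_nonneg (norm_nonneg x), mul_one]
  have hF2' : a * ‖x - y‖ ≤ R * (a + L) * ‖u - v‖ := by
    have f1 := mul_le_mul_of_nonneg_left hF2 ha.le
    have f2 := mul_le_mul_of_nonneg_right hxR (mul_nonneg ha.le (norm_nonneg (u - v)))
    linarith only [hF1, f1, f2]
  -- inner product identities
  have hinn : ⟪x, y⟫ = ‖x‖ * ‖y‖ * ⟪u, v⟫ := by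
    conv_lhs => rw [← hxu, ← hyv]
    rw [real_inner_smul_left, real_inner_smul_right]
    ring
  have huvsq : ‖u - v‖ ^ 2 = 2 - 2 * ⟪u, v⟫ := by
    rw [norm_sub_sq_real, hu1, hv1]
    ring
  have hF3 : ‖x‖ * ‖y‖ - ⟪x, y⟫ = ‖x‖ * ‖y‖ / 2 * ‖u - v‖ ^ 2 := by
    rw [hinn, huvsq]
    ring
  -- main quadratic lower bound
  have hGoal : a ^ 2 * rr ^ 2 * ‖x - y‖ ^ 2 ≤ 2 * R ^ 2 * (a + L) ^ 2 * (‖x‖ * ‖y‖ - ⟪x, y⟫) := by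
    have h1 : rr ^ 2 * ‖u - v‖ ^ 2 ≤ ‖x‖ * ‖y‖ * ‖u - v‖ ^ 2 := by
      have f1 := mul_le_mul_of_nonneg_right (mul_le_mul hxr hyr hrr.le (norm_nonneg x)) (sq_nonneg ‖u - v‖)
      linarith only [f1]
    have h2 : (a * ‖x - y‖) ^ 2 ≤ (R * (a + L) * ‖u - v‖) ^ 2 := by
      apply pow_le_pow_left₀ (by positivity) hF2'
    have h3 : rr ^ 2 * (a * ‖x - y‖) ^ 2 ≤ rr ^ 2 * (R * (a + L) * ‖u - v‖) ^ 2 :=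
      mul_le_mul_of_nonneg_left h2 (by positivity)
    have h4 : R ^ 2 * (a + L) ^ 2 * (rr ^ 2 * ‖u - v‖ ^ 2) ≤ R ^ 2 * (a + L) ^ 2 * (‖x‖ * ‖y‖ * ‖u - v‖ ^ 2) :=
      mul_le_mul_of_nonneg_left h1 (by positivity)
    have h5 : 2 * R ^ 2 * (a + L) ^ 2 * (‖x‖ * ‖y‖ - ⟪x, y⟫) =
        R ^ 2 * (a + L) ^ 2 * (‖x‖ * ‖y‖ * ‖u - v‖ ^ 2) := by
      linear_combination (2 * R ^ 2 * (a + L) ^ 2) * hF3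
    linarith only [h3, h4, h5]
  -- the gap between ‖x‖+‖y‖ and ‖x+y‖
  have hF4 : ‖x‖ * ‖y‖ - ⟪x, y⟫ ≤ 2 * R * (‖x‖ + ‖y‖ - ‖x + y‖) := by
    have en := norm_add_sq_real x y
    have hxys : ‖x + y‖ ≤ ‖x‖ + ‖y‖ := norm_add_le x y
    have h4R : ‖x‖ + ‖y‖ + ‖x + y‖ ≤ 4 * R := by
      have := norm_nonneg (x + y)
      linarith
    have hprod : (0:ℝ) ≤ (‖x‖ + ‖y‖ - ‖x + y‖) * (4 * R - (‖x‖ + ‖y‖ + ‖x + y‖)) :=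
      mul_nonneg (by linarith only [hxys]) (by linarith only [h4R])
    linarith only [hprod, en]
  -- estimate at the midpoint
  have hmid : midpoint ℝ x y = (2⁻¹ : ℝ) • (x + y) := by
    rw [midpoint_eq_smul_add, invOf_eq_inv]
  have hg1 : gauge C (midpoint ℝ x y) = 2⁻¹ * gauge C (x + y) := by
    rw [hmid, gauge_smul_of_nonneg (by norm_num : (0:ℝ) ≤ 2⁻¹), smul_eq_mul]
  have hg2 : gauge C (x + y) ≤ gauge C x + gauge C y := gauge_add_le hCconv habs x y
  have hn1 : ‖midpoint ℝ x y‖ = 2⁻¹ * ‖x + y‖ := by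
    rw [hmid, norm_smul, Real.norm_eq_abs]
    norm_num
  have hC2 : 2 * (gauge C (midpoint ℝ x y) + a * ‖midpoint ℝ x y‖) ≤
      2 * b - a * (‖x‖ + ‖y‖ - ‖x + y‖) := by
    rw [hg1, hn1]
    linarith only [hg2, hfx, hfy]
  -- combining everything
  have hGAPlb : a ^ 2 * rr ^ 2 * ‖x - y‖ ^ 2 ≤
      4 * R ^ 3 * (a + L) ^ 2 * (‖x‖ + ‖y‖ - ‖x + y‖) := by
    have := mul_le_mul_of_nonneg_left hF4 (show (0:ℝ) ≤ 2 * R ^ 2 * (a + L) ^ 2 by positivity)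
    linarith only [hGoal, this]
  have hLM : L * M * (8 * R ^ 3 * (a + L) ^ 2) = a ^ 3 * rr ^ 2 := by
    rw [hMdef]
    field_simp
  have h8 : (0:ℝ) < 8 * R ^ 3 * (a + L) ^ 2 := by positivity
  have hfs : L * (M * ‖x - y‖ ^ 2) ≤ a / 2 * (‖x‖ + ‖y‖ - ‖x + y‖) := by
    have hLM2 : L * (M * ‖x - y‖ ^ 2) * (8 * R ^ 3 * (a + L) ^ 2) =
        a ^ 3 * rr ^ 2 * ‖x - y‖ ^ 2 := by
      linear_combination ‖x - y‖ ^ 2 * hLM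
    have h1 : L * (M * ‖x - y‖ ^ 2) * (8 * R ^ 3 * (a + L) ^ 2) ≤
        a / 2 * (‖x‖ + ‖y‖ - ‖x + y‖) * (8 * R ^ 3 * (a + L) ^ 2) := by
      have f1 := mul_le_mul_of_nonneg_left hGAPlb ha.le
      linarith only [f1, hLM2]
    exact le_of_mul_le_mul_right h1 h8
  -- final Lipschitz step
  have hA := key z (midpoint ℝ x y)
  have hB : ‖z - midpoint ℝ x y‖ ≤ M * ‖x - y‖ ^ 2 := by
    rw [← dist_eq_norm]
    exact Metric.mem_closedBall.mp hz
  have hB' : L * ‖z - midpoint ℝ x y‖ ≤ L * (M * ‖x - y‖ ^ 2) :=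
    mul_le_mul_of_nonneg_left hB hL.le
  show gauge C z + a * ‖z‖ ≤ b
  linarith only [hA, hB', hC2, hfs]
end

section
/- Let n ≥ 1 and let K ⊆ ℝ^n be a compact convex set with nonempty interior such that for some M > 0 and all x, y in the frontier of K, the closed ball of center (x+y)/2 and radius M·‖x−y‖² is contained in K. Let π : ℝ^n → K denote the metric projection onto K, i.e. π(w) is the unique point of K with ‖w − π(w)‖ = dist(w, K) (which exists by the Hilbert projection theorem). Then for every ε > 0 there exists δ ∈ (0,1) such that for all w, v ∈ ℝ^n with dist(w,K) ≥ ε and dist(v,K) ≥ ε one has ‖π(w) − π(v)‖ ≤ (1 − δ)·‖w − v‖. (Claim (4.40) in the proof of Lemma 4.31: the nearest-point projection onto a uniformly convex compact body is uniformly contracting outside any neighborhood of the body.) -/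
open scoped RealInnerProductSpace

lemma var_aux {n : ℕ} {K : Set (EuclideanSpace ℝ (Fin n))} (hKconv : Convex ℝ K)
    {w p : EuclideanSpace ℝ (Fin n)} (hp : p ∈ K) (hd : ‖w - p‖ = Metric.infDist w K) :
    ∀ z ∈ K, ⟪w - p, z - p⟫ ≤ 0 := by
  rw [Metric.infDist_eq_iInf] at hd
  simp only [dist_eq_norm] at hd
  exact (norm_eq_iInf_iff_real_inner_le_zero hKconv hp).mp hd

lemma frontier_aux {n : ℕ} {K : Set (EuclideanSpace ℝ (Fin n))}
    {w p : EuclideanSpace ℝ (Fin n)} (hp : p ∈ K)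
    (hvar : ∀ z ∈ K, ⟪w - p, z - p⟫ ≤ 0) (hne : w ≠ p) : p ∈ frontier K := by
  refine Set.mem_diff_of_mem (subset_closure hp) (fun hmem => ?_)
  rw [mem_interior_iff_mem_nhds, Metric.mem_nhds_iff] at hmem
  obtain ⟨η, hη, hball⟩ := hmem
  have hwp : 0 < ‖w - p‖ := by
    rw [norm_pos_iff]
    intro h
    exact hne (by rwa [sub_eq_zero] at h)
  set s : ℝ := η / (2 * ‖w - p‖) with hs
  have hs0 : 0 < s := div_pos hη (by positivity)
  set z : EuclideanSpace ℝ (Fin n) := p + s • (w - p) with hz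
  have hzK : z ∈ K := by
    apply hball
    rw [Metric.mem_ball, dist_eq_norm]
    have : z - p = s • (w - p) := by rw [hz]; abel
    rw [this, norm_smul, Real.norm_eq_abs, abs_of_pos hs0, hs,
      div_mul_eq_mul_div, mul_comm 2 ‖w - p‖, ← div_div,
      mul_div_assoc, div_self (ne_of_gt hwp), mul_one]
    linarith
  have := hvar z hzK
  have hzp : z - p = s • (w - p) := by rw [hz]; abel
  rw [hzp, real_inner_smul_right, real_inner_self_eq_norm_sq] at this
  have hpos : 0 < s * ‖w - p‖ ^ 2 := by positivity
  linarith

lemma key_aux {n : ℕ} {K : Set (EuclideanSpace ℝ (Fin n))}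
    {M ε : ℝ} (hM : 0 < M) (hε : 0 < ε)
    (huc : ∀ x ∈ frontier K, ∀ y ∈ frontier K,
      Metric.closedBall (midpoint ℝ x y) (M * ‖x - y‖ ^ 2) ⊆ K)
    {w p q : EuclideanSpace ℝ (Fin n)} (hpf : p ∈ frontier K) (hqf : q ∈ frontier K)
    (hvar : ∀ z ∈ K, ⟪w - p, z - p⟫ ≤ 0)
    (hwp : ε ≤ ‖w - p‖) :
    ⟪w - p, q - p⟫ ≤ -(2 * (M * ‖p - q‖ ^ 2) * ε) := by
  have hwp0 : 0 < ‖w - p‖ := lt_of_lt_of_le hε hwp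
  set r : ℝ := M * ‖p - q‖ ^ 2 with hr
  have hr0 : 0 ≤ r := by positivity
  set u : EuclideanSpace ℝ (Fin n) := ‖w - p‖⁻¹ • (w - p) with hu
  set z : EuclideanSpace ℝ (Fin n) := midpoint ℝ p q + r • u with hz
  have hzK : z ∈ K := by
    apply huc p hpf q hqf
    rw [Metric.mem_closedBall, dist_eq_norm]
    have : z - midpoint ℝ p q = r • u := by rw [hz]; abel
    rw [this, norm_smul, Real.norm_eq_abs, abs_of_nonneg hr0, hu, norm_smul,
      Real.norm_eq_abs, abs_of_pos (inv_pos.mpr hwp0),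
      inv_mul_cancel₀ (ne_of_gt hwp0), mul_one]
  have := hvar z hzK
  have hzp : z - p = (2 : ℝ)⁻¹ • (q - p) + r • u := by
    rw [hz, midpoint_eq_smul_add, invOf_eq_inv]
    module
  rw [hzp, inner_add_right, real_inner_smul_right, real_inner_smul_right, hu,
    real_inner_smul_right, real_inner_self_eq_norm_sq] at this
  have h2 : ‖w - p‖⁻¹ * ‖w - p‖ ^ 2 = ‖w - p‖ := by
    field_simp
  rw [h2] at this
  have hre : r * ‖w - p‖ ≥ r * ε := by
    exact mul_le_mul_of_nonneg_left hwp hr0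
  nlinarith

/-- claim (4.40) in the proof of Lemma 4.31.  Let `K ⊆ ℝⁿ` be a compact
convex set with nonempty interior which is uniformly convex in the quantitative sense:
for some `M > 0` and all `x, y` in the frontier of `K`, the closed ball centered at the
midpoint of `x, y` with radius `M‖x−y‖²` is contained in `K`.  Let `π` be the metric
projection onto `K` (characterized by `π w ∈ K` and `‖w − π w‖ = dist(w, K)`).  Then for
every `ε > 0` there is `δ ∈ (0,1)` such that `π` is `(1−δ)`-contracting on the set of
points at distance at least `ε` from `K`. -/
theorem stmt3 (n : ℕ) (hn : 1 ≤ n) (K : Set (EuclideanSpace ℝ (Fin n)))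
    (hKcomp : IsCompact K) (hKconv : Convex ℝ K) (hKint : (interior K).Nonempty)
    (M : ℝ) (hM : 0 < M)
    (huc : ∀ x ∈ frontier K, ∀ y ∈ frontier K,
      Metric.closedBall (midpoint ℝ x y) (M * ‖x - y‖ ^ 2) ⊆ K)
    (π : EuclideanSpace ℝ (Fin n) → EuclideanSpace ℝ (Fin n))
    (hπmem : ∀ w, π w ∈ K)
    (hπdist : ∀ w, ‖w - π w‖ = Metric.infDist w K) :
    ∀ ε > (0 : ℝ), ∃ δ ∈ Set.Ioo (0 : ℝ) 1,
      ∀ w v : EuclideanSpace ℝ (Fin n),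
        ε ≤ Metric.infDist w K → ε ≤ Metric.infDist v K →
        ‖π w - π v‖ ≤ (1 - δ) * ‖w - v‖ := by
  intro ε hε
  have hden : (0 : ℝ) < 1 + 4 * M * ε := by positivity
  refine ⟨4 * M * ε / (1 + 4 * M * ε), ⟨by positivity, by
    rw [div_lt_one hden]; linarith⟩, ?_⟩
  have h1δ : 1 - 4 * M * ε / (1 + 4 * M * ε) = 1 / (1 + 4 * M * ε) := by
    field_simp
    ring
  rw [h1δ]
  intro w v hw hv
  set p := π w with hp
  set q := π v with hq
  have hwp : ε ≤ ‖w - p‖ := by rw [hπdist w]; exact hw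
  have hvq : ε ≤ ‖v - q‖ := by rw [hπdist v]; exact hv
  have hwp0 : 0 < ‖w - p‖ := lt_of_lt_of_le hε hwp
  have hvq0 : 0 < ‖v - q‖ := lt_of_lt_of_le hε hvq
  have hvarw := var_aux hKconv (hπmem w) (hπdist w)
  have hvarv := var_aux hKconv (hπmem v) (hπdist v)
  have hwne : w ≠ p := fun h => by simp [h] at hwp0
  have hvne : v ≠ q := fun h => by simp [h] at hvq0
  have hpf : p ∈ frontier K := frontier_aux (hπmem w) hvarw hwne
  have hqf : q ∈ frontier K := frontier_aux (hπmem v) hvarv hvne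
  rcases eq_or_ne p q with hpq | hpq
  · rw [hpq, sub_self, norm_zero]
    positivity
  have h1 := key_aux hM hε huc hpf hqf hvarw hwp
  have h2 := key_aux hM hε huc hqf hpf hvarv hvq
  have hnorm : ‖q - p‖ = ‖p - q‖ := norm_sub_rev q p
  rw [hnorm] at h2
  have hdecomp : ⟪w - v, p - q⟫ =
      ⟪w - p, p - q⟫ + ⟪p - q, p - q⟫ + ⟪q - v, p - q⟫ := by
    rw [← inner_add_left, ← inner_add_left]
    congr 1
    abel
  have e1 : ⟪w - p, p - q⟫ = -⟪w - p, q - p⟫ := by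
    rw [← inner_neg_right]; congr 1; abel
  have e2 : ⟪q - v, p - q⟫ = -⟪v - q, p - q⟫ := by
    rw [← inner_neg_left]; congr 1; abel
  have hself : ⟪p - q, p - q⟫ = ‖p - q‖ ^ 2 := real_inner_self_eq_norm_sq _
  have hCS : ⟪w - v, p - q⟫ ≤ ‖w - v‖ * ‖p - q‖ := real_inner_le_norm _ _
  have hlow : (1 + 4 * M * ε) * ‖p - q‖ ^ 2 ≤ ⟪w - v, p - q⟫ := by
    rw [hdecomp, e1, e2, hself]
    nlinarith
  have hpq0 : 0 < ‖p - q‖ := by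
    rw [norm_pos_iff]
    intro h; exact hpq (by rwa [sub_eq_zero] at h)
  rw [div_mul_eq_mul_div, le_div_iff₀ hden, mul_comm]
  nlinarith
end

section
/- Let Q be a 2-dimensional linear subspace of ℝ^4, let p¹ be the orthogonal projection onto Q and p² the orthogonal projection onto the orthogonal complement Qᗮ. Then for every pair of vectors x, y ∈ ℝ^4 with ‖x‖ = ‖y‖ = 1 and ⟨x,y⟩ = 0, one has A(p¹x, p¹y) + A(p²x, p²y) ≤ 1. (Paper's Lemma 5.8, first part: the sum of the norms of the projections of a unit simple 2-vector onto two orthogonal planes in ℝ^4 is at most 1.) -/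
open scoped RealInnerProductSpace

/-- The area of the parallelogram spanned by `u` and `v`, i.e. the norm of the 2-vector
`u ∧ v`. -/
noncomputable def parArea {n : ℕ} (u v : EuclideanSpace ℝ (Fin n)) : ℝ :=
  Real.sqrt (‖u‖ ^ 2 * ‖v‖ ^ 2 - ⟪u, v⟫ ^ 2)

lemma parArea_le {n : ℕ} (u v : EuclideanSpace ℝ (Fin n)) : parArea u v ≤ ‖u‖ * ‖v‖ := by
  rw [parArea]
  calc Real.sqrt (‖u‖ ^ 2 * ‖v‖ ^ 2 - ⟪u, v⟫ ^ 2) ≤ Real.sqrt (‖u‖ ^ 2 * ‖v‖ ^ 2) :=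
        Real.sqrt_le_sqrt (by nlinarith [sq_nonneg ⟪u, v⟫])
    _ = ‖u‖ * ‖v‖ := by rw [← mul_pow, Real.sqrt_sq (by positivity)]

/-- Paper's Lemma 5.8, first part.  Let `Q` be a 2-dimensional linear
subspace of `ℝ⁴`, `p¹` the orthogonal projection onto `Q` and `p²` the orthogonal
projection onto `Qᗮ`.  For every orthonormal pair `x, y` in `ℝ⁴`,
`|p¹x ∧ p¹y| + |p²x ∧ p²y| ≤ 1`. -/
theorem stmt4 (Q : Submodule ℝ (EuclideanSpace ℝ (Fin 4)))
    (hQ : Module.finrank ℝ Q = 2)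
    (x y : EuclideanSpace ℝ (Fin 4)) (hx : ‖x‖ = 1) (hy : ‖y‖ = 1)
    (hxy : ⟪x, y⟫ = 0) :
    parArea (Submodule.orthogonalProjectionOnto Q x : EuclideanSpace ℝ (Fin 4))
        (Submodule.orthogonalProjectionOnto Q y : EuclideanSpace ℝ (Fin 4)) +
      parArea (Submodule.orthogonalProjectionOnto Qᗮ x : EuclideanSpace ℝ (Fin 4))
        (Submodule.orthogonalProjectionOnto Qᗮ y : EuclideanSpace ℝ (Fin 4)) ≤ 1 := by
  have hpx := Submodule.norm_sq_eq_add_norm_sq_projection x Q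
  have hpy := Submodule.norm_sq_eq_add_norm_sq_projection y Q
  rw [hx] at hpx
  rw [hy] at hpy
  have h1 := parArea_le (Submodule.orthogonalProjectionOnto Q x : EuclideanSpace ℝ (Fin 4))
    (Submodule.orthogonalProjectionOnto Q y : EuclideanSpace ℝ (Fin 4))
  have h2 := parArea_le (Submodule.orthogonalProjectionOnto Qᗮ x : EuclideanSpace ℝ (Fin 4))
    (Submodule.orthogonalProjectionOnto Qᗮ y : EuclideanSpace ℝ (Fin 4))
  simp only [Submodule.norm_coe] at h1 h2
  nlinarith [sq_nonneg (‖Submodule.orthogonalProjectionOnto Q x‖ - ‖Submodule.orthogonalProjectionOnto Q y‖),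
    sq_nonneg (‖Submodule.orthogonalProjectionOnto Qᗮ x‖ - ‖Submodule.orthogonalProjectionOnto Qᗮ y‖),
    parArea_le (Submodule.orthogonalProjectionOnto Q x : EuclideanSpace ℝ (Fin 4))
      (Submodule.orthogonalProjectionOnto Q y : EuclideanSpace ℝ (Fin 4))]
end

section
/- Let Q be a 2-dimensional linear subspace of ℝ^4, let p¹ be the orthogonal projection onto Q and p² the orthogonal projection onto the orthogonal complement Qᗮ. Let x, y ∈ ℝ^4 with ‖x‖ = ‖y‖ = 1 and ⟨x,y⟩ = 0. Then A(p¹x, p¹y) + A(p²x, p²y) = 1 if and only if there exist α ∈ [0, π/2] and unit vectors v₁, v₂ ∈ Q with ⟨v₁,v₂⟩ = 0 and unit vectors u₁, u₂ ∈ Qᗮ with ⟨u₁,u₂⟩ = 0 such that x = (cos α)·v₁ + (sin α)·u₁ and y = (cos α)·v₂ + (sin α)·u₂. (Paper's Lemma 5.8, second part: characterization of the unit simple 2-vectors achieving equality.) -/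
open scoped RealInnerProductSpace


lemma real_aux (A B C D t s : ℝ)
    (hA : 0 ≤ A) (hB : 0 ≤ B) (hC : 0 ≤ C) (hD : 0 ≤ D)
    (hAB : A ^ 2 + B ^ 2 = 1) (hCD : C ^ 2 + D ^ 2 = 1)
    (hts : t + s = 0)
    (hcs1 : t ^ 2 ≤ A ^ 2 * C ^ 2) (hcs2 : s ^ 2 ≤ B ^ 2 * D ^ 2)
    (h : Real.sqrt (A ^ 2 * C ^ 2 - t ^ 2) + Real.sqrt (B ^ 2 * D ^ 2 - s ^ 2) = 1) :
    t = 0 ∧ s = 0 ∧ A = C ∧ B = D ∧ A ≤ 1 := by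
  have h1 : Real.sqrt (A ^ 2 * C ^ 2 - t ^ 2) ≤ A * C := by
    calc Real.sqrt (A ^ 2 * C ^ 2 - t ^ 2) ≤ Real.sqrt ((A * C) ^ 2) := by
          apply Real.sqrt_le_sqrt; nlinarith [sq_nonneg t]
      _ = A * C := Real.sqrt_sq (by positivity)
  have h2 : Real.sqrt (B ^ 2 * D ^ 2 - s ^ 2) ≤ B * D := by
    calc Real.sqrt (B ^ 2 * D ^ 2 - s ^ 2) ≤ Real.sqrt ((B * D) ^ 2) := by
          apply Real.sqrt_le_sqrt; nlinarith [sq_nonneg s]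
      _ = B * D := Real.sqrt_sq (by positivity)
  have hcs : A * C + B * D ≤ 1 := by
    nlinarith [sq_nonneg (A - C), sq_nonneg (B - D)]
  have he1 : Real.sqrt (A ^ 2 * C ^ 2 - t ^ 2) = A * C := le_antisymm h1 (by linarith)
  have he2 : Real.sqrt (B ^ 2 * D ^ 2 - s ^ 2) = B * D := le_antisymm h2 (by linarith)
  have hq1 : A ^ 2 * C ^ 2 - t ^ 2 = (A * C) ^ 2 := by
    rw [← he1]
    exact (Real.sq_sqrt (show (0:ℝ) ≤ A ^ 2 * C ^ 2 - t ^ 2 by nlinarith)).symm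
  have hq2 : B ^ 2 * D ^ 2 - s ^ 2 = (B * D) ^ 2 := by
    rw [← he2]
    exact (Real.sq_sqrt (show (0:ℝ) ≤ B ^ 2 * D ^ 2 - s ^ 2 by nlinarith)).symm
  have hsum : A * C + B * D = 1 := by rw [he1, he2] at h; exact h
  clear h he1 he2 h1 h2 hcs1 hcs2
  have ht2 : t ^ 2 = 0 := by nlinarith
  have ht0 : t = 0 := (pow_eq_zero_iff two_ne_zero).mp ht2
  have hs0 : s = 0 := by linarith
  refine ⟨ht0, hs0, ?_, ?_, ?_⟩
  · nlinarith [sq_nonneg (A - C), sq_nonneg (B - D)]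
  · nlinarith [sq_nonneg (A - C), sq_nonneg (B - D)]
  · have hA2 : A ^ 2 ≤ 1 := by nlinarith [sq_nonneg B]
    exact (pow_le_one_iff_of_nonneg hA two_ne_zero).mp hA2

lemma exists_pair (K : Submodule ℝ (EuclideanSpace ℝ (Fin 4)))
    (hK : Module.finrank ℝ K = 2) :
    ∃ w₁ w₂ : EuclideanSpace ℝ (Fin 4), w₁ ∈ K ∧ w₂ ∈ K ∧
      ‖w₁‖ = 1 ∧ ‖w₂‖ = 1 ∧ ⟪w₁, w₂⟫ = 0 := by
  let b := stdOrthonormalBasis ℝ K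
  have h2 : 0 < Module.finrank ℝ K := by omega
  have h2' : 1 < Module.finrank ℝ K := by omega
  refine ⟨b ⟨0, h2⟩, b ⟨1, h2'⟩, (b ⟨0, h2⟩).2, (b ⟨1, h2'⟩).2, ?_, ?_, ?_⟩
  · exact b.orthonormal.1 ⟨0, h2⟩
  · exact b.orthonormal.1 ⟨1, h2'⟩
  · rw [← Submodule.coe_inner]
    exact b.orthonormal.2 (by simp)


set_option maxHeartbeats 1000000 in
/-- Paper's Lemma 5.8, second part.  Let `Q` be a 2-dimensional linear
subspace of `ℝ⁴`, `p¹` the orthogonal projection onto `Q` and `p²` the orthogonal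
projection onto `Qᗮ`, and let `x, y` be an orthonormal pair in `ℝ⁴`.  Then
`|p¹x ∧ p¹y| + |p²x ∧ p²y| = 1` if and only if there exist `α ∈ [0, π/2]`, orthonormal
unit vectors `v₁, v₂ ∈ Q` and orthonormal unit vectors `u₁, u₂ ∈ Qᗮ` with
`x = cos α · v₁ + sin α · u₁` and `y = cos α · v₂ + sin α · u₂`. -/
theorem stmt5 (Q : Submodule ℝ (EuclideanSpace ℝ (Fin 4)))
    (hQ : Module.finrank ℝ Q = 2)
    (x y : EuclideanSpace ℝ (Fin 4)) (hx : ‖x‖ = 1) (hy : ‖y‖ = 1)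
    (hxy : ⟪x, y⟫ = 0) :
    (parArea (Submodule.orthogonalProjection Q x : EuclideanSpace ℝ (Fin 4))
        (Submodule.orthogonalProjection Q y : EuclideanSpace ℝ (Fin 4)) +
      parArea (Submodule.orthogonalProjection Qᗮ x : EuclideanSpace ℝ (Fin 4))
        (Submodule.orthogonalProjection Qᗮ y : EuclideanSpace ℝ (Fin 4)) = 1) ↔
    ∃ α ∈ Set.Icc (0 : ℝ) (Real.pi / 2),
      ∃ v₁ v₂ u₁ u₂ : EuclideanSpace ℝ (Fin 4),
        v₁ ∈ Q ∧ v₂ ∈ Q ∧ u₁ ∈ Qᗮ ∧ u₂ ∈ Qᗮ ∧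
        ‖v₁‖ = 1 ∧ ‖v₂‖ = 1 ∧ ‖u₁‖ = 1 ∧ ‖u₂‖ = 1 ∧
        ⟪v₁, v₂⟫ = 0 ∧ ⟪u₁, u₂⟫ = 0 ∧
        x = Real.cos α • v₁ + Real.sin α • u₁ ∧
        y = Real.cos α • v₂ + Real.sin α • u₂ := by
  set a : EuclideanSpace ℝ (Fin 4) := (Submodule.orthogonalProjection Q x : EuclideanSpace ℝ (Fin 4)) with ha_def
  set b : EuclideanSpace ℝ (Fin 4) := (Submodule.orthogonalProjection Qᗮ x : EuclideanSpace ℝ (Fin 4)) with hb_def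
  set c : EuclideanSpace ℝ (Fin 4) := (Submodule.orthogonalProjection Q y : EuclideanSpace ℝ (Fin 4)) with hc_def
  set d : EuclideanSpace ℝ (Fin 4) := (Submodule.orthogonalProjection Qᗮ y : EuclideanSpace ℝ (Fin 4)) with hd_def
  have ha : a ∈ Q := SetLike.coe_mem _
  have hb : b ∈ Qᗮ := SetLike.coe_mem _
  have hc : c ∈ Q := SetLike.coe_mem _
  have hd : d ∈ Qᗮ := SetLike.coe_mem _
  have hax : a + b = x := by
    rw [ha_def, hb_def]; simp only [Submodule.orthogonalProjection]; simp
  have hcy : c + d = y := by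
    rw [hc_def, hd_def]; simp only [Submodule.orthogonalProjection]; simp
  clear_value a b c d
  have hab0 : ⟪a, b⟫ = 0 := Submodule.inner_right_of_mem_orthogonal ha hb
  have hcd0 : ⟪c, d⟫ = 0 := Submodule.inner_right_of_mem_orthogonal hc hd
  have had0 : ⟪a, d⟫ = 0 := Submodule.inner_right_of_mem_orthogonal ha hd
  have hbc0 : ⟪b, c⟫ = 0 := by
    rw [real_inner_comm]; exact Submodule.inner_right_of_mem_orthogonal hc hb
  have hAB : ‖a‖ ^ 2 + ‖b‖ ^ 2 = 1 := by
    have h := norm_add_sq_real a b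
    rw [hax, hx, hab0] at h
    nlinarith [h]
  have hCD : ‖c‖ ^ 2 + ‖d‖ ^ 2 = 1 := by
    have h := norm_add_sq_real c d
    rw [hcy, hy, hcd0] at h
    nlinarith [h]
  have ht : ⟪a, c⟫ + ⟪b, d⟫ = 0 := by
    rw [← hax, ← hcy] at hxy
    simp only [inner_add_left, inner_add_right, had0, hbc0] at hxy
    linarith
  have hQperp : Module.finrank ℝ Qᗮ = 2 := by
    have hh := Submodule.finrank_add_finrank_orthogonal (𝕜 := ℝ) Q
    rw [hQ, finrank_euclideanSpace_fin] at hh; omega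
  constructor
  · -- forward
    intro h
    have hcs1 : ⟪a, c⟫ ^ 2 ≤ ‖a‖ ^ 2 * ‖c‖ ^ 2 := by
      have h1 := abs_real_inner_le_norm a c
      have h2 := abs_nonneg ⟪a, c⟫
      have h3 := sq_abs ⟪a, c⟫
      nlinarith
    have hcs2 : ⟪b, d⟫ ^ 2 ≤ ‖b‖ ^ 2 * ‖d‖ ^ 2 := by
      have h1 := abs_real_inner_le_norm b d
      have h2 := abs_nonneg ⟪b, d⟫
      have h3 := sq_abs ⟪b, d⟫
      nlinarith
    rw [parArea, parArea] at h
    obtain ⟨hac0, hbd0, hACe, hBDe, hA1⟩ :=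
      real_aux ‖a‖ ‖b‖ ‖c‖ ‖d‖ ⟪a, c⟫ ⟪b, d⟫ (norm_nonneg a) (norm_nonneg b)
        (norm_nonneg c) (norm_nonneg d) hAB hCD ht hcs1 hcs2 h
    set α := Real.arccos ‖a‖ with hα_def
    have hcosα : Real.cos α = ‖a‖ := Real.cos_arccos (by linarith [norm_nonneg a]) hA1
    have hsinα : Real.sin α = ‖b‖ := by
      rw [hα_def, Real.sin_arccos]
      rw [show 1 - ‖a‖ ^ 2 = ‖b‖ ^ 2 by linarith]
      exact Real.sqrt_sq (norm_nonneg b)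
    have hαIcc : α ∈ Set.Icc (0:ℝ) (Real.pi / 2) :=
      ⟨Real.arccos_nonneg _, Real.arccos_le_pi_div_two.mpr (norm_nonneg a)⟩
    rcases eq_or_ne ‖a‖ 0 with hA0 | hA0
    · have ha0 : a = 0 := norm_eq_zero.mp hA0
      have hc0 : c = 0 := norm_eq_zero.mp (by rw [← hACe]; exact hA0)
      have hB1 : ‖b‖ = 1 := by nlinarith [norm_nonneg b, hA0, hAB]
      have hD1 : ‖d‖ = 1 := by rw [← hBDe]; exact hB1
      obtain ⟨v₁, v₂, hv₁, hv₂, hnv₁, hnv₂, hvv⟩ := exists_pair Q hQ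
      refine ⟨α, hαIcc, v₁, v₂, b, d, hv₁, hv₂, hb, hd, hnv₁, hnv₂, hB1, hD1, hvv, hbd0, ?_, ?_⟩
      · rw [hcosα, hA0, hsinα, hB1, zero_smul, one_smul, zero_add, ← hax, ha0, zero_add]
      · rw [hcosα, hA0, hsinα, hB1, zero_smul, one_smul, zero_add, ← hcy, hc0, zero_add]
    · rcases eq_or_ne ‖b‖ 0 with hB0 | hB0
      · have hb0 : b = 0 := norm_eq_zero.mp hB0
        have hd0 : d = 0 := norm_eq_zero.mp (by rw [← hBDe]; exact hB0)
        have hA1' : ‖a‖ = 1 := by nlinarith [norm_nonneg a, hB0, hAB]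
        have hC1 : ‖c‖ = 1 := by rw [← hACe]; exact hA1'
        obtain ⟨u₁, u₂, hu₁, hu₂, hnu₁, hnu₂, huu⟩ := exists_pair Qᗮ hQperp
        refine ⟨α, hαIcc, a, c, u₁, u₂, ha, hc, hu₁, hu₂, hA1', hC1, hnu₁, hnu₂, hac0, huu, ?_, ?_⟩
        · rw [hcosα, hA1', hsinα, hB0, zero_smul, one_smul, add_zero, ← hax, hb0, add_zero]
        · rw [hcosα, hA1', hsinα, hB0, zero_smul, one_smul, add_zero, ← hcy, hd0, add_zero]
      · have hC0 : ‖c‖ ≠ 0 := by rw [← hACe]; exact hA0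
        have hD0 : ‖d‖ ≠ 0 := by rw [← hBDe]; exact hB0
        refine ⟨α, hαIcc, ‖a‖⁻¹ • a, ‖c‖⁻¹ • c, ‖b‖⁻¹ • b, ‖d‖⁻¹ • d,
          Q.smul_mem _ ha, Q.smul_mem _ hc, Qᗮ.smul_mem _ hb, Qᗮ.smul_mem _ hd,
          ?_, ?_, ?_, ?_, ?_, ?_, ?_, ?_⟩
        · rw [norm_smul, Real.norm_eq_abs, abs_inv, abs_of_nonneg (norm_nonneg a),
            inv_mul_cancel₀ hA0]
        · rw [norm_smul, Real.norm_eq_abs, abs_inv, abs_of_nonneg (norm_nonneg c),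
            inv_mul_cancel₀ hC0]
        · rw [norm_smul, Real.norm_eq_abs, abs_inv, abs_of_nonneg (norm_nonneg b),
            inv_mul_cancel₀ hB0]
        · rw [norm_smul, Real.norm_eq_abs, abs_inv, abs_of_nonneg (norm_nonneg d),
            inv_mul_cancel₀ hD0]
        · rw [real_inner_smul_left, real_inner_smul_right, hac0]; ring
        · rw [real_inner_smul_left, real_inner_smul_right, hbd0]; ring
        · rw [hcosα, hsinα, smul_smul, smul_smul, mul_inv_cancel₀ hA0,
            mul_inv_cancel₀ hB0, one_smul, one_smul, hax]
        · rw [hcosα, hACe, hsinα, hBDe, smul_smul, smul_smul, mul_inv_cancel₀ hC0,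
            mul_inv_cancel₀ hD0, one_smul, one_smul, hcy]
  · -- backward
    rintro ⟨α, hα, v₁, v₂, u₁, u₂, hv₁, hv₂, hu₁, hu₂, hnv₁, hnv₂, hnu₁, hnu₂,
      hvv, huu, hxe, hye⟩
    have hQle : Q ≤ Qᗮᗮ := Submodule.le_orthogonal_orthogonal Q
    have pQ : ∀ (v u : EuclideanSpace ℝ (Fin 4)), v ∈ Q → u ∈ Qᗮ → ∀ r s : ℝ,
        (Submodule.orthogonalProjection Q (r • v + s • u) : EuclideanSpace ℝ (Fin 4)) = r • v := by
      intro v u hv hu r s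
      rw [map_add, map_smul, map_smul,
        Submodule.orthogonalProjectionOnto_apply_of_mem_orthogonal hu]
      push_cast
      rw [← Submodule.starProjection_apply, Submodule.starProjection_eq_self_iff.mpr hv]
      simp
    have pQp : ∀ (v u : EuclideanSpace ℝ (Fin 4)), v ∈ Q → u ∈ Qᗮ → ∀ r s : ℝ,
        (Submodule.orthogonalProjection Qᗮ (r • v + s • u) : EuclideanSpace ℝ (Fin 4)) = s • u := by
      intro v u hv hu r s
      rw [map_add, map_smul, map_smul,
        Submodule.orthogonalProjectionOnto_apply_of_mem_orthogonal (hQle hv)]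
      push_cast
      rw [← Submodule.starProjection_apply, Submodule.starProjection_eq_self_iff.mpr hu]
      simp
    have e1 : a = Real.cos α • v₁ := by rw [ha_def, hxe, pQ v₁ u₁ hv₁ hu₁]
    have e2 : c = Real.cos α • v₂ := by rw [hc_def, hye, pQ v₂ u₂ hv₂ hu₂]
    have e3 : b = Real.sin α • u₁ := by rw [hb_def, hxe, pQp v₁ u₁ hv₁ hu₁]
    have e4 : d = Real.sin α • u₂ := by rw [hd_def, hye, pQp v₂ u₂ hv₂ hu₂]
    have key : ∀ (r : ℝ) (w₁ w₂ : EuclideanSpace ℝ (Fin 4)), ‖w₁‖ = 1 → ‖w₂‖ = 1 →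
        ⟪w₁, w₂⟫ = 0 → parArea (r • w₁) (r • w₂) = r ^ 2 := by
      intro r w₁ w₂ hw₁ hw₂ hw
      rw [parArea, real_inner_smul_left, real_inner_smul_right, hw, norm_smul, norm_smul,
        hw₁, hw₂, Real.norm_eq_abs]
      rw [show (|r| * 1) ^ 2 * (|r| * 1) ^ 2 - (r * (r * 0)) ^ 2 = (r ^ 2) ^ 2 by
        rw [mul_one, sq_abs]; ring]
      exact Real.sqrt_sq (sq_nonneg r)
    rw [e1, e2, e3, e4, key _ _ _ hnv₁ hnv₂ hvv, key _ _ _ hnu₁ hnu₂ huu]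
    rw [add_comm]
    exact Real.sin_sq_add_cos_sq α
end

section
/- Let (e₁, e₂, e₃, e₄) be an orthonormal basis of ℝ^4 and let 0 ≤ α₁ ≤ α₂ ≤ π/2. Let P¹ be the linear span of {e₁, e₂} and P² the linear span of {(cos α₁)·e₁ + (sin α₁)·e₃, (cos α₂)·e₂ + (sin α₂)·e₄} (so that P¹ and P² are two planes in ℝ^4 with characteristic angles α₁ ≤ α₂). Let p¹ and p² denote the orthogonal projections onto P¹ and P² respectively. Then for every pair of vectors x, y ∈ ℝ^4 with ‖x‖ = ‖y‖ = 1 and ⟨x,y⟩ = 0, one has A(p¹x, p¹y) + A(p²x, p²y) ≤ 1 + 2·cos α₁. (Paper's Lemma 5.11: projection bound for unit simple 2-vectors onto two planes with characteristic angles α₁ ≤ α₂.) -/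
open scoped RealInnerProductSpace

set_option maxHeartbeats 1000000

/-- Orthogonal projection onto the span of an orthonormal pair. -/
lemma proj_span_pair {n : ℕ} (u v x : EuclideanSpace ℝ (Fin n))
    (hu : ⟪u, u⟫ = 1) (hv : ⟪v, v⟫ = 1) (huv : ⟪u, v⟫ = 0) :
    (Submodule.orthogonalProjectionOnto (Submodule.span ℝ {u, v}) x : EuclideanSpace ℝ (Fin n))
      = ⟪x, u⟫ • u + ⟪x, v⟫ • v := by
  have hvu : ⟪v, u⟫ = 0 := by rw [real_inner_comm]; exact huv
  apply Submodule.eq_starProjection_of_mem_of_inner_eq_zero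
  · exact Submodule.mem_span_pair.2 ⟨⟪x, u⟫, ⟪x, v⟫, rfl⟩
  · intro w hw
    obtain ⟨a, b, rfl⟩ := Submodule.mem_span_pair.1 hw
    simp only [inner_sub_left, inner_add_left, inner_add_right, real_inner_smul_left,
      real_inner_smul_right, hu, hv, huv, hvu]
    ring

/-- parArea of combinations of an orthonormal pair is the absolute determinant. -/
lemma parArea_comb {n : ℕ} (u v : EuclideanSpace ℝ (Fin n)) (a b c d : ℝ)
    (hu : ⟪u, u⟫ = 1) (hv : ⟪v, v⟫ = 1) (huv : ⟪u, v⟫ = 0) :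
    parArea (a • u + b • v) (c • u + d • v) = |a * d - b * c| := by
  have hvu : ⟪v, u⟫ = 0 := by rw [real_inner_comm]; exact huv
  have h : ‖a • u + b • v‖ ^ 2 * ‖c • u + d • v‖ ^ 2
      - ⟪a • u + b • v, c • u + d • v⟫ ^ 2 = (a * d - b * c) ^ 2 := by
    rw [← real_inner_self_eq_norm_sq, ← real_inner_self_eq_norm_sq]
    simp only [inner_add_left, inner_add_right, real_inner_smul_left,
      real_inner_smul_right, hu, hv, huv, hvu]
    ring
  rw [parArea, h, Real.sqrt_sq_eq_abs]

/-- Abstract form of the core inequality. -/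
lemma key_abstract (c₁ C S C' S' u₁ u₃ v₁ v₃ : ℝ)
    (hc₁ : 0 ≤ c₁)
    (hCS : C ^ 2 + S ^ 2 = 1) (hCS' : C' ^ 2 + S' ^ 2 = 1) (hC0 : 0 ≤ C)
    (hK2 : 1 + C' ≤ 2 * c₁ ^ 2) (hK3 : 1 - C ≤ 8 * c₁ ^ 2)
    (hu : u₁ ^ 2 + u₃ ^ 2 ≤ 1) (hv : v₁ ^ 2 + v₃ ^ 2 ≤ 1) :
    |u₁ + v₁| + |u₁ * C + u₃ * S + v₁ * C' + v₃ * S'| ≤ 2 + 4 * c₁ := by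
  have hC1 : C ≤ 1 := by nlinarith [sq_nonneg S, sq_nonneg (C - 1)]
  have hC'1 : C' ≤ 1 := by nlinarith [sq_nonneg S', sq_nonneg (C' - 1)]
  have hC'm : -1 ≤ C' := by nlinarith [sq_nonneg S', sq_nonneg (C' + 1)]
  have ht1 : (u₁ * (1 + C) + u₃ * S) ^ 2 ≤ 2 + 2 * C := by
    nlinarith [sq_nonneg (u₁ * S - u₃ * (1 + C)),
      mul_nonneg (by linarith : (0:ℝ) ≤ 2 + 2 * C) (sub_nonneg.2 hu)]
  have ht2 : (v₁ * (1 + C') + v₃ * S') ^ 2 ≤ 2 + 2 * C' := by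
    nlinarith [sq_nonneg (v₁ * S' - v₃ * (1 + C')),
      mul_nonneg (by linarith : (0:ℝ) ≤ 2 + 2 * C') (sub_nonneg.2 hv)]
  have ht3 : (u₁ * (1 - C) - u₃ * S) ^ 2 ≤ 2 - 2 * C := by
    nlinarith [sq_nonneg (u₁ * S + u₃ * (1 - C)),
      mul_nonneg (by linarith : (0:ℝ) ≤ 2 - 2 * C) (sub_nonneg.2 hu)]
  have ht4 : (v₁ * (1 - C') - v₃ * S') ^ 2 ≤ 2 - 2 * C' := by
    nlinarith [sq_nonneg (v₁ * S' + v₃ * (1 - C')),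
      mul_nonneg (by linarith : (0:ℝ) ≤ 2 - 2 * C') (sub_nonneg.2 hv)]
  have H1a : u₁ + u₁ * C + u₃ * S ≤ 2 := by nlinarith [ht1, hC1]
  have H1b : -2 ≤ u₁ + u₁ * C + u₃ * S := by nlinarith [ht1, hC1]
  have H2a : v₁ + v₁ * C' + v₃ * S' ≤ 2 * c₁ := by nlinarith [ht2, hK2, hc₁]
  have H2b : -(2 * c₁) ≤ v₁ + v₁ * C' + v₃ * S' := by nlinarith [ht2, hK2, hc₁]
  have H3a : u₁ - u₁ * C - u₃ * S ≤ 4 * c₁ := by nlinarith [ht3, hK3, hc₁]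
  have H3b : -(4 * c₁) ≤ u₁ - u₁ * C - u₃ * S := by nlinarith [ht3, hK3, hc₁]
  have H4a : v₁ - v₁ * C' - v₃ * S' ≤ 2 := by nlinarith [ht4, hC'm]
  have H4b : -2 ≤ v₁ - v₁ * C' - v₃ * S' := by nlinarith [ht4, hC'm]
  rcases abs_cases (u₁ + v₁) with ⟨h, _⟩ | ⟨h, _⟩ <;>
    rcases abs_cases (u₁ * C + u₃ * S + v₁ * C' + v₃ * S') with ⟨h', _⟩ | ⟨h', _⟩ <;>
      rw [h, h'] <;> linarith

/-- The core scalar inequality, after passing to (anti-)self-dual coordinates. -/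
lemma key_ineq (c₁ s₁ c₂ s₂ u₁ u₃ v₁ v₃ : ℝ)
    (hc₁ : 0 ≤ c₁) (hs₁ : 0 ≤ s₁) (hc₂ : 0 ≤ c₂) (hs₂ : 0 ≤ s₂)
    (h1 : c₁ ^ 2 + s₁ ^ 2 = 1) (h2 : c₂ ^ 2 + s₂ ^ 2 = 1)
    (hcc : c₂ ≤ c₁) (hss : s₁ ≤ s₂)
    (hu : u₁ ^ 2 + u₃ ^ 2 ≤ 1) (hv : v₁ ^ 2 + v₃ ^ 2 ≤ 1) :
    |u₁ + v₁| + |u₁ * (c₁ * c₂ + s₁ * s₂) + u₃ * (c₁ * s₂ - s₁ * c₂)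
        + v₁ * (c₁ * c₂ - s₁ * s₂) + v₃ * (c₁ * s₂ + s₁ * c₂)| ≤ 2 + 4 * c₁ := by
  apply key_abstract c₁ (c₁ * c₂ + s₁ * s₂) (c₁ * s₂ - s₁ * c₂)
    (c₁ * c₂ - s₁ * s₂) (c₁ * s₂ + s₁ * c₂) u₁ u₃ v₁ v₃ hc₁ _ _ _ _ _ hu hv
  · linear_combination (c₂ ^ 2 + s₂ ^ 2) * h1 + h2
  · linear_combination (c₂ ^ 2 + s₂ ^ 2) * h1 + h2
  · exact add_nonneg (mul_nonneg hc₁ hc₂) (mul_nonneg hs₁ hs₂)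
  · nlinarith [mul_nonneg hc₁ (sub_nonneg.2 hcc), mul_nonneg hs₁ (sub_nonneg.2 hss)]
  · nlinarith [mul_nonneg hc₁ hc₂, mul_nonneg hs₁ (sub_nonneg.2 hss), sq_nonneg c₁]

/-- The scalar inequality in Plücker coordinates. -/
lemma key_ineq2 (c₁ s₁ c₂ s₂ x0 x1 x2 x3 y0 y1 y2 y3 : ℝ)
    (hc₁ : 0 ≤ c₁) (hs₁ : 0 ≤ s₁) (hc₂ : 0 ≤ c₂) (hs₂ : 0 ≤ s₂)
    (h1 : c₁ ^ 2 + s₁ ^ 2 = 1) (h2 : c₂ ^ 2 + s₂ ^ 2 = 1)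
    (hcc : c₂ ≤ c₁) (hss : s₁ ≤ s₂)
    (hx : x0 ^ 2 + x1 ^ 2 + x2 ^ 2 + x3 ^ 2 = 1)
    (hy : y0 ^ 2 + y1 ^ 2 + y2 ^ 2 + y3 ^ 2 = 1)
    (hxy : x0 * y0 + x1 * y1 + x2 * y2 + x3 * y3 = 0) :
    |x0 * y1 - x1 * y0| +
      |(c₁ * x0 + s₁ * x2) * (c₂ * y1 + s₂ * y3)
        - (c₂ * x1 + s₂ * x3) * (c₁ * y0 + s₁ * y2)| ≤ 1 + 2 * c₁ := by
  have hu : ((x0 * y1 - x1 * y0) + (x2 * y3 - x3 * y2)) ^ 2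
      + ((x0 * y2 - x2 * y0) - (x1 * y3 - x3 * y1)) ^ 2
      + ((x0 * y3 - x3 * y0) + (x1 * y2 - x2 * y1)) ^ 2 = 1 := by
    have lag : ((x0 * y1 - x1 * y0) + (x2 * y3 - x3 * y2)) ^ 2
        + ((x0 * y2 - x2 * y0) - (x1 * y3 - x3 * y1)) ^ 2
        + ((x0 * y3 - x3 * y0) + (x1 * y2 - x2 * y1)) ^ 2
        = (x0 ^ 2 + x1 ^ 2 + x2 ^ 2 + x3 ^ 2) * (y0 ^ 2 + y1 ^ 2 + y2 ^ 2 + y3 ^ 2)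
          - (x0 * y0 + x1 * y1 + x2 * y2 + x3 * y3) ^ 2 := by ring
    rw [lag, hx, hy, hxy]; norm_num
  have hv : ((x0 * y1 - x1 * y0) - (x2 * y3 - x3 * y2)) ^ 2
      + ((x0 * y2 - x2 * y0) + (x1 * y3 - x3 * y1)) ^ 2
      + ((x0 * y3 - x3 * y0) - (x1 * y2 - x2 * y1)) ^ 2 = 1 := by
    have lag : ((x0 * y1 - x1 * y0) - (x2 * y3 - x3 * y2)) ^ 2
        + ((x0 * y2 - x2 * y0) + (x1 * y3 - x3 * y1)) ^ 2
        + ((x0 * y3 - x3 * y0) - (x1 * y2 - x2 * y1)) ^ 2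
        = (x0 ^ 2 + x1 ^ 2 + x2 ^ 2 + x3 ^ 2) * (y0 ^ 2 + y1 ^ 2 + y2 ^ 2 + y3 ^ 2)
          - (x0 * y0 + x1 * y1 + x2 * y2 + x3 * y3) ^ 2 := by ring
    rw [lag, hx, hy, hxy]; norm_num
  have hu13 : ((x0 * y1 - x1 * y0) + (x2 * y3 - x3 * y2)) ^ 2
      + ((x0 * y3 - x3 * y0) + (x1 * y2 - x2 * y1)) ^ 2 ≤ 1 := by
    nlinarith [sq_nonneg ((x0 * y2 - x2 * y0) - (x1 * y3 - x3 * y1))]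
  have hv13 : ((x0 * y1 - x1 * y0) - (x2 * y3 - x3 * y2)) ^ 2
      + ((x0 * y3 - x3 * y0) - (x1 * y2 - x2 * y1)) ^ 2 ≤ 1 := by
    nlinarith [sq_nonneg ((x0 * y2 - x2 * y0) + (x1 * y3 - x3 * y1))]
  have main := key_ineq c₁ s₁ c₂ s₂
    ((x0 * y1 - x1 * y0) + (x2 * y3 - x3 * y2))
    ((x0 * y3 - x3 * y0) + (x1 * y2 - x2 * y1))
    ((x0 * y1 - x1 * y0) - (x2 * y3 - x3 * y2))
    ((x0 * y3 - x3 * y0) - (x1 * y2 - x2 * y1))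
    hc₁ hs₁ hc₂ hs₂ h1 h2 hcc hss hu13 hv13
  have e1 : x0 * y1 - x1 * y0
      = (((x0 * y1 - x1 * y0) + (x2 * y3 - x3 * y2))
        + ((x0 * y1 - x1 * y0) - (x2 * y3 - x3 * y2))) / 2 := by ring
  have e2 : (c₁ * x0 + s₁ * x2) * (c₂ * y1 + s₂ * y3)
        - (c₂ * x1 + s₂ * x3) * (c₁ * y0 + s₁ * y2)
      = (((x0 * y1 - x1 * y0) + (x2 * y3 - x3 * y2)) * (c₁ * c₂ + s₁ * s₂)
        + ((x0 * y3 - x3 * y0) + (x1 * y2 - x2 * y1)) * (c₁ * s₂ - s₁ * c₂)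
        + ((x0 * y1 - x1 * y0) - (x2 * y3 - x3 * y2)) * (c₁ * c₂ - s₁ * s₂)
        + ((x0 * y3 - x3 * y0) - (x1 * y2 - x2 * y1)) * (c₁ * s₂ + s₁ * c₂)) / 2 := by
    ring
  rw [e1, e2, abs_div, abs_div, abs_two]
  linarith [main]

/-- Paper's Lemma 5.11.  Let `(e₁, e₂, e₃, e₄)` be an orthonormal basis
of `ℝ⁴` and `0 ≤ α₁ ≤ α₂ ≤ π/2`.  Let `P¹ = span{e₁, e₂}` and
`P² = span{cos α₁ · e₁ + sin α₁ · e₃, cos α₂ · e₂ + sin α₂ · e₄}`, with orthogonal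
projections `p¹, p²`.  Then for every orthonormal pair `x, y` in `ℝ⁴`,
`|p¹x ∧ p¹y| + |p²x ∧ p²y| ≤ 1 + 2 cos α₁`. -/
theorem stmt6 (e : OrthonormalBasis (Fin 4) ℝ (EuclideanSpace ℝ (Fin 4)))
    (α₁ α₂ : ℝ) (hα₁ : 0 ≤ α₁) (hα₁₂ : α₁ ≤ α₂) (hα₂ : α₂ ≤ Real.pi / 2)
    (x y : EuclideanSpace ℝ (Fin 4)) (hx : ‖x‖ = 1) (hy : ‖y‖ = 1)
    (hxy : ⟪x, y⟫ = 0) :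
    parArea
        (Submodule.orthogonalProjectionOnto (Submodule.span ℝ {e 0, e 1}) x : EuclideanSpace ℝ (Fin 4))
        (Submodule.orthogonalProjectionOnto (Submodule.span ℝ {e 0, e 1}) y : EuclideanSpace ℝ (Fin 4)) +
      parArea
        (Submodule.orthogonalProjectionOnto (Submodule.span ℝ
            {Real.cos α₁ • e 0 + Real.sin α₁ • e 2,
             Real.cos α₂ • e 1 + Real.sin α₂ • e 3}) x : EuclideanSpace ℝ (Fin 4))
        (Submodule.orthogonalProjectionOnto (Submodule.span ℝ
            {Real.cos α₁ • e 0 + Real.sin α₁ • e 2,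
             Real.cos α₂ • e 1 + Real.sin α₂ • e 3}) y : EuclideanSpace ℝ (Fin 4))
      ≤ 1 + 2 * Real.cos α₁ := by
  have hpi := Real.pi_pos
  set c₁ := Real.cos α₁ with hc₁def
  set s₁ := Real.sin α₁ with hs₁def
  set c₂ := Real.cos α₂ with hc₂def
  set s₂ := Real.sin α₂ with hs₂def
  have hc₁ : 0 ≤ c₁ := Real.cos_nonneg_of_mem_Icc ⟨by linarith, by linarith⟩
  have hc₂0 : 0 ≤ c₂ := Real.cos_nonneg_of_mem_Icc ⟨by linarith, by linarith⟩
  have hs₁0 : 0 ≤ s₁ := Real.sin_nonneg_of_nonneg_of_le_pi hα₁ (by linarith)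
  have hs₂0 : 0 ≤ s₂ := Real.sin_nonneg_of_nonneg_of_le_pi (by linarith) (by linarith)
  have h1 : c₁ ^ 2 + s₁ ^ 2 = 1 := Real.cos_sq_add_sin_sq α₁
  have h2 : c₂ ^ 2 + s₂ ^ 2 = 1 := Real.cos_sq_add_sin_sq α₂
  have hcc : c₂ ≤ c₁ := Real.cos_le_cos_of_nonneg_of_le_pi hα₁ (by linarith) hα₁₂
  have hss : s₁ ≤ s₂ := Real.sin_le_sin_of_le_of_le_pi_div_two (by linarith) hα₂ hα₁₂
  -- inner products of basis vectors
  have hee : ∀ i j : Fin 4, ⟪e i, e j⟫ = if i = j then (1:ℝ) else 0 :=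
    orthonormal_iff_ite.mp e.orthonormal
  -- the second pair of orthonormal vectors
  set f₁ : EuclideanSpace ℝ (Fin 4) := c₁ • e 0 + s₁ • e 2 with hf₁def
  set f₂ : EuclideanSpace ℝ (Fin 4) := c₂ • e 1 + s₂ • e 3 with hf₂def
  have hf₁ : ⟪f₁, f₁⟫ = 1 := by
    simp only [hf₁def, inner_add_left, inner_add_right, real_inner_smul_left,
      real_inner_smul_right, hee]
    norm_num [show (2:Fin 4) ≠ 0 from by decide, show (0:Fin 4) ≠ 2 from by decide]
    linear_combination h1
  have hf₂ : ⟪f₂, f₂⟫ = 1 := by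
    simp only [hf₂def, inner_add_left, inner_add_right, real_inner_smul_left,
      real_inner_smul_right, hee]
    norm_num [show (3:Fin 4) ≠ 1 from by decide, show (1:Fin 4) ≠ 3 from by decide]
    linear_combination h2
  have hf₁₂ : ⟪f₁, f₂⟫ = 0 := by
    simp only [hf₁def, hf₂def, inner_add_left, inner_add_right, real_inner_smul_left,
      real_inner_smul_right, hee]
    norm_num [show (0:Fin 4) ≠ 1 from by decide, show (0:Fin 4) ≠ 3 from by decide,
      show (2:Fin 4) ≠ 1 from by decide, show (2:Fin 4) ≠ 3 from by decide]
  have he00 : ⟪e 0, e 0⟫ = (1:ℝ) := by simp [hee]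
  have he11 : ⟪e 1, e 1⟫ = (1:ℝ) := by simp [hee]
  have he01 : ⟪e 0, e 1⟫ = (0:ℝ) := by simp [hee]
  -- projections
  rw [proj_span_pair (e 0) (e 1) x he00 he11 he01,
    proj_span_pair (e 0) (e 1) y he00 he11 he01,
    proj_span_pair f₁ f₂ x hf₁ hf₂ hf₁₂,
    proj_span_pair f₁ f₂ y hf₁ hf₂ hf₁₂,
    parArea_comb (e 0) (e 1) _ _ _ _ he00 he11 he01,
    parArea_comb f₁ f₂ _ _ _ _ hf₁ hf₂ hf₁₂]
  -- coordinates
  have hfx : ⟪x, f₁⟫ = c₁ * ⟪x, e 0⟫ + s₁ * ⟪x, e 2⟫ := by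
    simp only [hf₁def, inner_add_right, real_inner_smul_right]
  have hfx2 : ⟪x, f₂⟫ = c₂ * ⟪x, e 1⟫ + s₂ * ⟪x, e 3⟫ := by
    simp only [hf₂def, inner_add_right, real_inner_smul_right]
  have hfy : ⟪y, f₁⟫ = c₁ * ⟪y, e 0⟫ + s₁ * ⟪y, e 2⟫ := by
    simp only [hf₁def, inner_add_right, real_inner_smul_right]
  have hfy2 : ⟪y, f₂⟫ = c₂ * ⟪y, e 1⟫ + s₂ * ⟪y, e 3⟫ := by
    simp only [hf₂def, inner_add_right, real_inner_smul_right]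
  rw [hfx, hfx2, hfy, hfy2]
  -- norm/orthogonality constraints in coordinates
  have hxx := e.sum_inner_mul_inner x x
  have hyy := e.sum_inner_mul_inner y y
  have hxy' := e.sum_inner_mul_inner x y
  rw [Fin.sum_univ_four] at hxx hyy hxy'
  rw [real_inner_self_eq_norm_sq, hx] at hxx
  rw [real_inner_self_eq_norm_sq, hy] at hyy
  rw [hxy] at hxy'
  have hXX : ⟪x, e 0⟫ ^ 2 + ⟪x, e 1⟫ ^ 2 + ⟪x, e 2⟫ ^ 2 + ⟪x, e 3⟫ ^ 2 = 1 := by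
    have c0 := real_inner_comm (e 0) x
    have c1 := real_inner_comm (e 1) x
    have c2 := real_inner_comm (e 2) x
    have c3 := real_inner_comm (e 3) x
    linear_combination hxx + ⟪x, e 0⟫ * c0 + ⟪x, e 1⟫ * c1 + ⟪x, e 2⟫ * c2 + ⟪x, e 3⟫ * c3
  have hYY : ⟪y, e 0⟫ ^ 2 + ⟪y, e 1⟫ ^ 2 + ⟪y, e 2⟫ ^ 2 + ⟪y, e 3⟫ ^ 2 = 1 := by
    have c0 := real_inner_comm (e 0) y
    have c1 := real_inner_comm (e 1) y
    have c2 := real_inner_comm (e 2) y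
    have c3 := real_inner_comm (e 3) y
    linear_combination hyy + ⟪y, e 0⟫ * c0 + ⟪y, e 1⟫ * c1 + ⟪y, e 2⟫ * c2 + ⟪y, e 3⟫ * c3
  have hXY : ⟪x, e 0⟫ * ⟪y, e 0⟫ + ⟪x, e 1⟫ * ⟪y, e 1⟫
      + ⟪x, e 2⟫ * ⟪y, e 2⟫ + ⟪x, e 3⟫ * ⟪y, e 3⟫ = 0 := by
    have c0 := real_inner_comm (e 0) y
    have c1 := real_inner_comm (e 1) y
    have c2 := real_inner_comm (e 2) y
    have c3 := real_inner_comm (e 3) y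
    linear_combination hxy' + ⟪x, e 0⟫ * c0 + ⟪x, e 1⟫ * c1 + ⟪x, e 2⟫ * c2 + ⟪x, e 3⟫ * c3
  have final := key_ineq2 c₁ s₁ c₂ s₂ ⟪x, e 0⟫ ⟪x, e 1⟫ ⟪x, e 2⟫ ⟪x, e 3⟫
    ⟪y, e 0⟫ ⟪y, e 1⟫ ⟪y, e 2⟫ ⟪y, e 3⟫
    hc₁ hs₁0 hc₂0 hs₂0 h1 h2 hcc hss hXX hYY hXY
  calc |⟪x, e 0⟫ * ⟪y, e 1⟫ - ⟪x, e 1⟫ * ⟪y, e 0⟫|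
        + |(c₁ * ⟪x, e 0⟫ + s₁ * ⟪x, e 2⟫) * (c₂ * ⟪y, e 1⟫ + s₂ * ⟪y, e 3⟫)
          - (c₂ * ⟪x, e 1⟫ + s₂ * ⟪x, e 3⟫) * (c₁ * ⟪y, e 0⟫ + s₁ * ⟪y, e 2⟫)|
      ≤ 1 + 2 * c₁ := final
end
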